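/- arXiv:1808.02838 — 6 statements merged into one kernel-verified Lean document; each statement's English description precedes it below -/
import Mathlib

section
/- Let B ≥ 1 and let r, s : Fin B → ℝ be vectors with strictly positive entries such that r majorizes s. Then for every t ≥ 0, ∏_{i} (1 − exp(−r i · t)) ≤ ∏_{i} (1 − exp(−s i · t)). Equivalently, the tail probability of the maximum of B independent exponential random variables with rates r i, namely 1 − ∏_i (1 − exp(−r i · t)), is a Schur-convex function of the rate vector: it is pointwise at least the corresponding tail for rates s i. -/
open Finset


-- strict mono Fin map lower bound
lemma fin_strictMono_le {m B : ℕ} (e : Fin m → Fin B) (he : StrictMono e) :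
    ∀ j : Fin m, (j : ℕ) ≤ (e j : ℕ) := by
  have H : ∀ n : ℕ, ∀ h : n < m, n ≤ (e ⟨n, h⟩ : ℕ) := by
    intro n
    induction n with
    | zero => intro h; exact Nat.zero_le _
    | succ k ih =>
      intro h
      have hk : k < m := by omega
      have h1 := ih hk
      have h2 : e ⟨k, hk⟩ < e ⟨k + 1, h⟩ := he (by simp [Fin.lt_def])
      have h3 : (e ⟨k, hk⟩ : ℕ) < (e ⟨k + 1, h⟩ : ℕ) := h2
      omega
  intro j
  have := H j.1 j.2
  simpa using this

lemma fin_strictMono_upper {m B : ℕ} (e : Fin m → Fin B) (he : StrictMono e) :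
    ∀ j : Fin m, (e j : ℕ) + m ≤ B + (j : ℕ) := by
  intro k
  have hm : 0 < m := k.pos
  have e2 : Fin m → Fin B := fun j => (e j.rev).rev
  have he2 : StrictMono (fun j : Fin m => (e j.rev).rev) := by
    intro a b hab
    have : b.rev < a.rev := Fin.rev_lt_rev.mpr hab
    exact Fin.rev_lt_rev.mpr (he this)
  have h1 := fin_strictMono_le _ he2 k.rev
  simp only [Fin.rev_rev] at h1
  have hv1 : (k.rev : ℕ) = m - ((k : ℕ) + 1) := Fin.val_rev k
  have hv2 : ((e k).rev : ℕ) = B - (((e k) : ℕ) + 1) := Fin.val_rev (e k)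
  have hkm : (k : ℕ) < m := k.2
  have heB : ((e k) : ℕ) < B := (e k).2
  omega

-- sum over a k-subset is at most the top-k sum of a sorted (monotone) tuple
lemma sum_le_sorted_top {B : ℕ} (g : Fin B → ℝ) (hg : Monotone g)
    (S : Finset (Fin B)) (k : ℕ) (hS : S.card = k) :
    ∑ i ∈ S, g i ≤ ∑ j : Fin k, g ⟨B - k + (j : ℕ), by
      have h1 := j.2
      have h2 : k ≤ B := by simpa [hS] using Finset.card_le_card (Finset.subset_univ S)
      omega⟩ := by
  have hk : k ≤ B := by simpa [hS] using Finset.card_le_card (Finset.subset_univ S)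
  set e := S.orderEmbOfFin hS with he
  have hsum : ∑ i ∈ S, g i = ∑ j : Fin k, g (e j) := by
    rw [← Finset.sum_image (f := g) (g := fun j : Fin k => e j) (by
      intro a _ b _ hab; exact e.injective hab)]
    congr 1
    symm
    apply Finset.eq_of_subset_of_card_le
    · intro x hx
      simp only [Finset.mem_image] at hx
      obtain ⟨a, -, rfl⟩ := hx
      exact S.orderEmbOfFin_mem hS a
    · simp [hS, Finset.card_image_of_injective _ e.injective]
  rw [hsum]
  apply Finset.sum_le_sum
  intro j _
  apply hg
  have := fin_strictMono_upper e e.strictMono j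
  simp only [Fin.le_def]
  have hj := j.2
  omega

-- tangent line inequality for the concave function log(1 - exp(-x))
lemma tangent_log (x y : ℝ) (hx : 0 < x) (hy : 0 < y) :
    Real.log (1 - Real.exp (-x)) ≤
      Real.log (1 - Real.exp (-y)) + (1 / (Real.exp y - 1)) * (x - y) := by
  have hex : Real.exp (-x) < 1 := by
    rw [Real.exp_lt_one_iff]; linarith
  have hey : Real.exp (-y) < 1 := by
    rw [Real.exp_lt_one_iff]; linarith
  have hA : 0 < 1 - Real.exp (-x) := by linarith
  have hBv : 0 < 1 - Real.exp (-y) := by linarith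
  have hEy : 0 < Real.exp y - 1 := by
    have : 1 < Real.exp y := by rw [← Real.exp_zero]; exact Real.exp_lt_exp.mpr hy
    linarith
  have key : Real.log (1 - Real.exp (-x)) - Real.log (1 - Real.exp (-y)) ≤
      (1 - Real.exp (-x)) / (1 - Real.exp (-y)) - 1 := by
    rw [← Real.log_div (ne_of_gt hA) (ne_of_gt hBv)]
    exact Real.log_le_sub_one_of_pos (div_pos hA hBv)
  have hexp : 1 - Real.exp (y - x) ≤ x - y := by
    have := Real.add_one_le_exp (y - x)
    linarith
  have key2 : (1 - Real.exp (-x)) / (1 - Real.exp (-y)) - 1 ≤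
      (1 / (Real.exp y - 1)) * (x - y) := by
    rw [div_sub_one (ne_of_gt hBv), div_le_iff₀ hBv, one_div]
    have h0 : (1 - Real.exp (-y)) = Real.exp (-y) * (Real.exp y - 1) := by
      rw [mul_sub, ← Real.exp_add]; simp
    rw [h0]
    have hx' : Real.exp (-x) = Real.exp (-y) * Real.exp (y - x) := by
      rw [← Real.exp_add]; ring_nf
    rw [hx']
    have hrw : (Real.exp y - 1)⁻¹ * (x - y) * (Real.exp (-y) * (Real.exp y - 1))
        = Real.exp (-y) * (x - y) := by
      field_simp
    rw [hrw]
    have hpos := Real.exp_pos (-y)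
    nlinarith [mul_le_mul_of_nonneg_left hexp (le_of_lt hpos)]
  linarith

/-- `Majorizes r s` : the vector `r` majorizes the vector `s`, i.e. they have the same
total sum and, for every `m ≤ B`, the largest sum of `m` entries of `r` is at least the
largest sum of `m` entries of `s`. -/
def Majorizes {B : ℕ} (r s : Fin B → ℝ) : Prop :=
  (∑ i, r i = ∑ i, s i) ∧
    ∀ m ≤ B, ∀ S : Finset (Fin B), S.card = m →
      ∃ T : Finset (Fin B), T.card = m ∧ ∑ i ∈ S, s i ≤ ∑ i ∈ T, r i

/-- If the positive rate vector `r` majorizes the positive rate vector `s`, then for every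
`t ≥ 0` the CDF at `t` of the maximum of `B` independent exponential random variables with
rates `r i` is at most that for rates `s i`; equivalently, the tail probability
`1 - ∏ i (1 - exp (-(r i) t))` of the maximum is a Schur-convex function of the rate
vector. -/
theorem max_exponential_tail_schur_convex (B : ℕ) (hB : 1 ≤ B) (r s : Fin B → ℝ)
    (hr : ∀ i, 0 < r i) (hs : ∀ i, 0 < s i) (hmaj : Majorizes r s) :
    ∀ t : ℝ, 0 ≤ t →
      ∏ i, (1 - Real.exp (-(r i * t))) ≤ ∏ i, (1 - Real.exp (-(s i * t))) := by
  intro t ht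
  rcases eq_or_lt_of_le ht with hteq | htpos
  · simp [← hteq]
  clear ht
  -- sorted versions
  set σ : Equiv.Perm (Fin B) := Tuple.sort r with hσ
  set τ : Equiv.Perm (Fin B) := Tuple.sort s with hτ
  have hu : Monotone (r ∘ σ) := Tuple.monotone_sort r
  have hv : Monotone (s ∘ τ) := Tuple.monotone_sort s
  -- padded ℕ-indexed versions
  set pu : ℕ → ℝ := fun n => if h : n < B then r (σ ⟨n, h⟩) else 0 with hpu
  set pv : ℕ → ℝ := fun n => if h : n < B then s (τ ⟨n, h⟩) else 0 with hpv
  have hpu_eq : ∀ n (h : n < B), pu n = r (σ ⟨n, h⟩) := fun n h => dif_pos h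
  have hpv_eq : ∀ n (h : n < B), pv n = s (τ ⟨n, h⟩) := fun n h => dif_pos h
  have hpu_mono : ∀ i j : ℕ, i ≤ j → j < B → pu i ≤ pu j := by
    intro i j hij hj
    rw [hpu_eq i (lt_of_le_of_lt hij hj), hpu_eq j hj]
    exact hu (show (⟨i, _⟩ : Fin B) ≤ ⟨j, hj⟩ from hij)
  have hpv_mono : ∀ i j : ℕ, i ≤ j → j < B → pv i ≤ pv j := by
    intro i j hij hj
    rw [hpv_eq i (lt_of_le_of_lt hij hj), hpv_eq j hj]
    exact hv (show (⟨i, _⟩ : Fin B) ≤ ⟨j, hj⟩ from hij)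
  -- total sums
  have hsumu : ∑ i ∈ range B, pu i = ∑ i, r i := by
    rw [← Fin.sum_univ_eq_sum_range]
    rw [show ∑ i : Fin B, pu ↑i = ∑ i : Fin B, r (σ i) from
      Finset.sum_congr rfl fun i _ => by rw [hpu_eq i.1 i.2]]
    exact Equiv.sum_comp σ r
  have hsumv : ∑ i ∈ range B, pv i = ∑ i, s i := by
    rw [← Fin.sum_univ_eq_sum_range]
    rw [show ∑ i : Fin B, pv ↑i = ∑ i : Fin B, s (τ i) from
      Finset.sum_congr rfl fun i _ => by rw [hpv_eq i.1 i.2]]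
    exact Equiv.sum_comp τ s
  -- top-k sums dominate any k-subset sum (for r)
  have topR : ∀ k, k ≤ B → ∀ T : Finset (Fin B), T.card = k →
      ∑ i ∈ T, r i ≤ ∑ j ∈ range k, pu (B - k + j) := by
    intro k hk T hT
    have himg : (T.image σ.symm).card = k := by
      rw [Finset.card_image_of_injective _ σ.symm.injective, hT]
    have hTs : ∑ i ∈ T, r i = ∑ i ∈ T.image σ.symm, (r ∘ σ) i := by
      rw [Finset.sum_image (fun a _ b _ h => σ.symm.injective h)]
      exact Finset.sum_congr rfl fun i _ => by simp
    rw [hTs]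
    have := sum_le_sorted_top (r ∘ σ) hu (T.image σ.symm) k himg
    refine le_trans this (le_of_eq ?_)
    rw [← Fin.sum_univ_eq_sum_range]
    refine Finset.sum_congr rfl fun j _ => ?_
    rw [hpu_eq (B - k + j.1) (by have := j.2; omega)]
    rfl
  -- top-k sum of sorted s is a genuine subset sum
  have topS : ∀ k, k ≤ B → ∃ S : Finset (Fin B), S.card = k ∧
      ∑ i ∈ S, s i = ∑ j ∈ range k, pv (B - k + j) := by
    intro k hk
    refine ⟨Finset.image (fun j : Fin k => τ ⟨B - k + j.1, by have := j.2; omega⟩) univ, ?_, ?_⟩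
    · rw [Finset.card_image_of_injective, Finset.card_univ, Fintype.card_fin]
      intro a b hab
      have := τ.injective hab
      have h2 : B - k + a.1 = B - k + b.1 := congrArg Fin.val this
      exact Fin.ext (by omega)
    · rw [Finset.sum_image (fun a _ b _ hab => by
        have := τ.injective hab
        have h2 : B - k + a.1 = B - k + b.1 := congrArg Fin.val this
        exact Fin.ext (by omega))]
      rw [← Fin.sum_univ_eq_sum_range]
      refine Finset.sum_congr rfl fun j _ => ?_
      rw [hpv_eq (B - k + j.1) (by have := j.2; omega)]
  -- top-k of s dominated by top-k of r
  have topRS : ∀ k, k ≤ B →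
      ∑ j ∈ range k, pv (B - k + j) ≤ ∑ j ∈ range k, pu (B - k + j) := by
    intro k hk
    obtain ⟨S, hScard, hSsum⟩ := topS k hk
    obtain ⟨T, hTcard, hTle⟩ := hmaj.2 k hk S hScard
    rw [← hSsum]
    exact le_trans hTle (topR k hk T hTcard)
  -- splitting of total sum into bottom-m and top-(B-m)
  have split : ∀ (p : ℕ → ℝ) (m : ℕ), m ≤ B →
      ∑ i ∈ range B, p i = (∑ i ∈ range m, p i) +
        ∑ j ∈ range (B - m), p (B - (B - m) + j) := by
    intro p m hm
    have h1 : B - (B - m) = m := by omega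
    rw [h1]
    have hB' : B = m + (B - m) := by omega
    rw [hB', Finset.sum_range_add]
    have h2 : m + (B - m) - m = B - m := by omega
    rw [h2]
  -- bottom partial sums: r's are below s's
  have bot : ∀ m, m ≤ B → ∑ i ∈ range m, pu i ≤ ∑ i ∈ range m, pv i := by
    intro m hm
    have h1 := split pu m hm
    have h2 := split pv m hm
    have h3 := topRS (B - m) (by omega)
    have h4 : ∑ i, r i = ∑ i, s i := hmaj.1
    rw [hsumu] at h1; rw [hsumv] at h2
    linarith
  -- the multiplier sequence c (padded to be defined everywhere)
  set pv' : ℕ → ℝ := fun n => s (τ ⟨min n (B - 1), by omega⟩) with hpv'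
  have hpv'_eq : ∀ n, n < B → pv' n = pv n := by
    intro n hn
    rw [hpv_eq n hn]
    show s (τ ⟨min n (B - 1), _⟩) = s (τ ⟨n, hn⟩)
    have hmk : (⟨min n (B - 1), by omega⟩ : Fin B) = ⟨n, hn⟩ := by
      apply Fin.ext
      simp only
      omega
    rw [hmk]
  have hpv'_pos : ∀ n, 0 < pv' n := fun n => hs _
  have hpv'_mono : ∀ i j : ℕ, i ≤ j → pv' i ≤ pv' j := by
    intro i j hij
    exact hv (show (⟨min i (B-1), by omega⟩ : Fin B) ≤ ⟨min j (B-1), by omega⟩ by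
      simp [Fin.le_def]; omega)
  set c : ℕ → ℝ := fun n => 1 / (Real.exp (pv' n * t) - 1) with hc
  have hcpos : ∀ n, 0 < Real.exp (pv' n * t) - 1 := by
    intro n
    have : (0:ℝ) < pv' n * t := mul_pos (hpv'_pos n) htpos
    have h2 : 1 < Real.exp (pv' n * t) := by
      rw [← Real.exp_zero]; exact Real.exp_lt_exp.mpr this
    linarith
  have hcmono : ∀ i j : ℕ, i ≤ j → c j ≤ c i := by
    intro i j hij
    apply one_div_le_one_div_of_le (hcpos i)
    have : pv' i * t ≤ pv' j * t :=
      mul_le_mul_of_nonneg_right (hpv'_mono i j hij) (le_of_lt htpos)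
    have := Real.exp_le_exp.mpr this
    linarith
  set d : ℕ → ℝ := fun n => pu n - pv n with hd
  have hG : ∀ m, m ≤ B → ∑ i ∈ range m, d i ≤ 0 := by
    intro m hm
    have := bot m hm
    rw [hd]
    rw [Finset.sum_sub_distrib]
    linarith
  have hGB : ∑ i ∈ range B, d i = 0 := by
    rw [hd, Finset.sum_sub_distrib, hsumu, hsumv, hmaj.1, sub_self]
  -- Abel summation
  have abel := Finset.sum_range_by_parts c d B
  simp only [smul_eq_mul] at abel
  have key : ∑ i ∈ range B, c i * d i ≤ 0 := by
    rw [abel, hGB, mul_zero, zero_sub, neg_nonpos]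
    apply Finset.sum_nonneg
    intro i hi
    rw [Finset.mem_range] at hi
    have h1 : c (i + 1) - c i ≤ 0 := by
      have := hcmono i (i + 1) (Nat.le_succ i); linarith
    have h2 : ∑ j ∈ range (i + 1), d j ≤ 0 := hG (i + 1) (by omega)
    nlinarith
  -- tangent-line comparison, summed
  have tangent_sum : ∑ i ∈ range B, Real.log (1 - Real.exp (-(pu i * t))) ≤
      ∑ i ∈ range B, Real.log (1 - Real.exp (-(pv i * t))) := by
    have step : ∀ i ∈ range B, Real.log (1 - Real.exp (-(pu i * t))) ≤
        Real.log (1 - Real.exp (-(pv i * t))) + c i * d i * t := by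
      intro i hi
      rw [Finset.mem_range] at hi
      have hpui : 0 < pu i := by rw [hpu_eq i hi]; exact hr _
      have hpvi : 0 < pv i := by rw [hpv_eq i hi]; exact hs _
      have := tangent_log (pu i * t) (pv i * t) (mul_pos hpui htpos) (mul_pos hpvi htpos)
      have hcc : c i = 1 / (Real.exp (pv i * t) - 1) := by
        rw [hc]; simp only; rw [hpv'_eq i hi]
      rw [hcc]
      have harith : 1 / (Real.exp (pv i * t) - 1) * (pu i * t - pv i * t)
          = 1 / (Real.exp (pv i * t) - 1) * d i * t := by
        rw [hd]; ring
      linarith [harith ▸ this]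
    have := Finset.sum_le_sum step
    rw [Finset.sum_add_distrib] at this
    have h2 : ∑ i ∈ range B, c i * d i * t ≤ 0 := by
      rw [← Finset.sum_mul]
      exact mul_nonpos_of_nonpos_of_nonneg key (le_of_lt htpos)
    linarith
  -- convert products to exponentials of sums of logs
  have posr : ∀ i : Fin B, 0 < 1 - Real.exp (-(r i * t)) := by
    intro i
    have : Real.exp (-(r i * t)) < 1 := by
      rw [Real.exp_lt_one_iff]
      have := mul_pos (hr i) htpos; linarith
    linarith
  have poss : ∀ i : Fin B, 0 < 1 - Real.exp (-(s i * t)) := by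
    intro i
    have : Real.exp (-(s i * t)) < 1 := by
      rw [Real.exp_lt_one_iff]
      have := mul_pos (hs i) htpos; linarith
    linarith
  have prodr : ∏ i, (1 - Real.exp (-(r i * t)))
      = Real.exp (∑ i ∈ range B, Real.log (1 - Real.exp (-(pu i * t)))) := by
    rw [Real.exp_sum]
    rw [← Fin.prod_univ_eq_prod_range]
    rw [show ∏ i : Fin B, Real.exp (Real.log (1 - Real.exp (-(pu ↑i * t))))
        = ∏ i : Fin B, (1 - Real.exp (-(r (σ i) * t))) from
      Finset.prod_congr rfl fun i _ => by
        rw [hpu_eq i.1 i.2, Real.exp_log (by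
          have : Real.exp (-(r (σ ⟨i.1, i.2⟩) * t)) < 1 := by
            rw [Real.exp_lt_one_iff]
            have := mul_pos (hr (σ ⟨i.1, i.2⟩)) htpos; linarith
          linarith)]]
    exact (Equiv.prod_comp σ (fun i => 1 - Real.exp (-(r i * t)))).symm
  have prods : ∏ i, (1 - Real.exp (-(s i * t)))
      = Real.exp (∑ i ∈ range B, Real.log (1 - Real.exp (-(pv i * t)))) := by
    rw [Real.exp_sum]
    rw [← Fin.prod_univ_eq_prod_range]
    rw [show ∏ i : Fin B, Real.exp (Real.log (1 - Real.exp (-(pv ↑i * t))))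
        = ∏ i : Fin B, (1 - Real.exp (-(s (τ i) * t))) from
      Finset.prod_congr rfl fun i _ => by
        rw [hpv_eq i.1 i.2, Real.exp_log (by
          have : Real.exp (-(s (τ ⟨i.1, i.2⟩) * t)) < 1 := by
            rw [Real.exp_lt_one_iff]
            have := mul_pos (hs (τ ⟨i.1, i.2⟩)) htpos; linarith
          linarith)]]
    exact (Equiv.prod_comp τ (fun i => 1 - Real.exp (-(s i * t)))).symm
  rw [prodr, prods]
  exact Real.exp_le_exp.mpr tangent_sum
end

section
/- Lemma 1: Let B ≥ 1, λ > 0, and let r, s : Fin B → ℝ be vectors with strictly positive entries such that r majorizes s. Let μ_r be the product measure on (Fin B → ℝ) whose i-th factor is the exponential distribution with rate λ · r i, and define the service time T(r) = ∫ (sup_i x i) dμ_r(x), and similarly T(s) for μ_s. Then T(r) ≥ T(s); that is, if one batch assignment majorizes another, its expected overall service time (the expected maximum of the corresponding independent exponential batch recovery times) is at least as large. -/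
open Finset MeasureTheory ProbabilityTheory

set_option linter.unusedSectionVars false

open Real


-- g(x) = log(1 - exp(-x)),  g'(x) = exp(-x)/(1-exp(-x))
noncomputable def gFun (x : ℝ) : ℝ := Real.log (1 - Real.exp (-x))
noncomputable def gDer (x : ℝ) : ℝ := Real.exp (-x) / (1 - Real.exp (-x))

lemma one_sub_exp_pos {x : ℝ} (hx : 0 < x) : 0 < 1 - Real.exp (-x) := by
  have : Real.exp (-x) < 1 := by
    rw [Real.exp_lt_one_iff]; linarith
  linarith

lemma gDer_nonneg {x : ℝ} (hx : 0 < x) : 0 ≤ gDer x :=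
  div_nonneg (Real.exp_nonneg _) (one_sub_exp_pos hx).le

lemma gDer_anti {x y : ℝ} (hx : 0 < x) (hxy : x ≤ y) : gDer y ≤ gDer x := by
  have hy : 0 < y := lt_of_lt_of_le hx hxy
  have h1 : gDer x = 1 / (Real.exp x - 1) := by
    unfold gDer
    rw [Real.exp_neg]
    have he : (0:ℝ) < Real.exp x := Real.exp_pos x
    field_simp
  have h2 : gDer y = 1 / (Real.exp y - 1) := by
    unfold gDer
    rw [Real.exp_neg]
    have he : (0:ℝ) < Real.exp y := Real.exp_pos y
    field_simp
  rw [h1, h2]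
  have hex : (1:ℝ) < Real.exp x := by
    have := Real.add_one_le_exp x
    nlinarith
  have hey : Real.exp x ≤ Real.exp y := Real.exp_le_exp.2 hxy
  apply one_div_le_one_div_of_le <;> linarith

-- tangent line inequality: g x - g y ≤ g' y * (x - y)
lemma gFun_tangent {x y : ℝ} (hx : 0 < x) (hy : 0 < y) :
    gFun x - gFun y ≤ gDer y * (x - y) := by
  have px := one_sub_exp_pos hx
  have py := one_sub_exp_pos hy
  have hlog : gFun x - gFun y = Real.log ((1 - Real.exp (-x)) / (1 - Real.exp (-y))) := by
    unfold gFun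
    rw [Real.log_div (ne_of_gt px) (ne_of_gt py)]
  have h1 : Real.log ((1 - Real.exp (-x)) / (1 - Real.exp (-y)))
      ≤ (1 - Real.exp (-x)) / (1 - Real.exp (-y)) - 1 :=
    Real.log_le_sub_one_of_pos (div_pos px py)
  have key : (1 - Real.exp (-x)) / (1 - Real.exp (-y)) - 1 ≤ gDer y * (x - y) := by
    unfold gDer
    rw [div_sub_one (ne_of_gt py), div_mul_eq_mul_div, div_le_div_iff_of_pos_right py]
    -- (1 - exp(-x)) - (1 - exp(-y)) ≤ exp(-y) * (x - y)
    -- i.e. exp(-y) - exp(-x) ≤ exp(-y)(x-y), divide by exp(-y):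
    have hexp : (y - x) + 1 ≤ Real.exp (y - x) := Real.add_one_le_exp _
    have hey : (0:ℝ) < Real.exp (-y) := Real.exp_pos _
    have : Real.exp (-x) = Real.exp (-y) * Real.exp (y - x) := by
      rw [← Real.exp_add]; ring_nf
    nlinarith [Real.exp_pos (y - x)]
  linarith

-- Abel-summation Schur-type inequality over `range n`.
lemma abel_schur (n : ℕ) (A B : ℕ → ℝ)
    (hApos : ∀ i < n, 0 < A i) (hBpos : ∀ i < n, 0 < B i)
    (hBmono : ∀ i, i + 1 < n → B i ≤ B (i + 1))
    (hpre : ∀ m ≤ n, ∑ i ∈ range m, A i ≤ ∑ i ∈ range m, B i)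
    (hsum : ∑ i ∈ range n, A i = ∑ i ∈ range n, B i) :
    ∑ i ∈ range n, gFun (A i) ≤ ∑ i ∈ range n, gFun (B i) := by
  have key : ∑ i ∈ range n, (gFun (A i) - gFun (B i)) ≤
      ∑ i ∈ range n, gDer (B i) * (A i - B i) := by
    apply Finset.sum_le_sum
    intro i hi
    exact gFun_tangent (hApos i (mem_range.1 hi)) (hBpos i (mem_range.1 hi))
  have abel : ∑ i ∈ range n, gDer (B i) * (A i - B i)
      = gDer (B (n-1)) * ∑ i ∈ range n, (A i - B i)
        - ∑ i ∈ range (n-1), (gDer (B (i+1)) - gDer (B i)) * ∑ j ∈ range (i+1), (A j - B j) := by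
    simpa using Finset.sum_range_by_parts (fun i => gDer (B i)) (fun i => A i - B i) n
  have htot : ∑ i ∈ range n, (A i - B i) = 0 := by
    rw [Finset.sum_sub_distrib, hsum, sub_self]
  have hterm : ∀ i ∈ range (n-1),
      0 ≤ (gDer (B (i+1)) - gDer (B i)) * ∑ j ∈ range (i+1), (A j - B j) := by
    intro i hi
    have hi' : i + 1 < n := by have := mem_range.1 hi; omega
    have h1 : gDer (B (i+1)) - gDer (B i) ≤ 0 := by
      have := gDer_anti (hBpos i (by omega)) (hBmono i hi')
      linarith
    have h2 : ∑ j ∈ range (i+1), (A j - B j) ≤ 0 := by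
      rw [Finset.sum_sub_distrib]
      have := hpre (i+1) (by omega)
      linarith
    nlinarith [h1, h2]
  have : ∑ i ∈ range n, gDer (B i) * (A i - B i) ≤ 0 := by
    rw [abel, htot, mul_zero, zero_sub, neg_nonpos]
    exact Finset.sum_nonneg hterm
  have := key.trans this
  rw [Finset.sum_sub_distrib] at this
  linarith


lemma strictMono_fin_nat_le {k : ℕ} {u : Fin k → ℕ} (h : StrictMono u) :
    ∀ m (hm : m < k), m ≤ u ⟨m, hm⟩ := by
  intro m
  induction m with
  | zero => intro _; exact Nat.zero_le _
  | succ p ih =>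
    intro hm
    have hp : p < k := by omega
    have h1 := h (show (⟨p, hp⟩ : Fin k) < ⟨p+1, hm⟩ by simp [Fin.lt_def])
    have h2 := ih hp
    omega

lemma strictMono_fin_index_bound {n k : ℕ} {v : Fin k → Fin n} (hv : StrictMono v)
    (p : Fin k) : (v p : ℕ) ≤ n - k + p := by
  have hkn : k ≤ n := by
    have := Fintype.card_le_of_injective v hv.injective
    simpa using this
  have hn : ∀ j : Fin k, (v j : ℕ) ≤ n - 1 := fun j => by
    have := (v j).isLt; omega
  set u : Fin k → ℕ := fun j => n - 1 - (v j.rev : ℕ) with hu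
  have hmono : StrictMono u := by
    intro i j hij
    have h1 : j.rev < i.rev := Fin.rev_lt_rev.mpr hij
    have h2 := hv h1
    have h3 := hn i.rev
    have h4 := hn j.rev
    simp only [hu]
    rw [Fin.lt_def] at h2
    omega
  have hb := strictMono_fin_nat_le hmono (p.rev : ℕ) p.rev.isLt
  have heq : u ⟨(p.rev : ℕ), p.rev.isLt⟩ = n - 1 - (v p : ℕ) := by
    simp only [hu, Fin.eta, Fin.rev_rev]
  rw [heq] at hb
  have h5 := hn p
  have hrev : (p.rev : ℕ) = k - 1 - (p : ℕ) := by
    rw [Fin.val_rev]; omega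
  have h6 := p.isLt
  omega

lemma top_sum_eq {n k : ℕ} (hkn : k ≤ n) (g : Fin n → ℝ) :
    ∑ p : Fin k, g ⟨n - k + p, by omega⟩
      = ∑ j ∈ univ.filter (fun j : Fin n => n - k ≤ (j : ℕ)), g j :=
  Finset.sum_bij'
    (fun (p : Fin k) (_ : p ∈ univ) => (⟨n - k + p, by omega⟩ : Fin n))
    (fun a (ha : a ∈ univ.filter (fun j : Fin n => n - k ≤ (j : ℕ))) =>
      (⟨(a : ℕ) - (n - k), by simp only [mem_filter, mem_univ, true_and] at ha; omega⟩ : Fin k))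
    (fun p _ => by simp only [mem_filter, mem_univ, true_and]; omega)
    (fun a ha => mem_univ _)
    (fun p _ => by apply Fin.ext; simp)
    (fun a ha => by
      simp only [mem_filter, mem_univ, true_and] at ha
      apply Fin.ext; simp; omega)
    (fun p _ => rfl)

lemma card_filter_ge_fin {n k : ℕ} (hkn : k ≤ n) :
    (univ.filter (fun j : Fin n => n - k ≤ (j : ℕ))).card = k := by
  have h := top_sum_eq hkn (fun _ => (1 : ℝ))
  simp only [Finset.sum_const, Finset.card_univ, Fintype.card_fin, nsmul_eq_mul, mul_one] at h
  exact_mod_cast h.symm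

/-- sum over any `k`-subset of a monotone tuple is at most the sum of the top `k` values. -/
lemma sum_le_sum_top {n k : ℕ} (g : Fin n → ℝ) (hg : Monotone g)
    (U : Finset (Fin n)) (hU : U.card = k) :
    ∑ j ∈ U, g j ≤ ∑ j ∈ univ.filter (fun j : Fin n => n - k ≤ (j : ℕ)), g j := by
  have hkn : k ≤ n := by
    rw [← hU]; simpa using Finset.card_le_univ U
  have e := U.orderIsoOfFin hU
  have hL : ∑ j ∈ U, g j = ∑ p : Fin k, g (e p : Fin n) := by
    rw [← Finset.sum_coe_sort U g]
    exact (Equiv.sum_comp e.toEquiv (fun x => g (x : Fin n))).symm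
  rw [hL, ← top_sum_eq hkn g]
  apply Finset.sum_le_sum
  intro p _
  apply hg
  have hsm : StrictMono (fun q : Fin k => (e q : Fin n)) := fun i j hij =>
    Subtype.coe_lt_coe.2 (e.strictMono hij)
  have hbd := strictMono_fin_index_bound hsm p
  rw [Fin.le_def]
  simpa using hbd

lemma pre_sum_eq {n m : ℕ} (hm : m ≤ n) (f : Fin n → ℝ) :
    ∑ i ∈ range m, (if h : i < n then f ⟨i, h⟩ else 0)
      = ∑ j ∈ univ.filter (fun j : Fin n => (j : ℕ) < m), f j :=
  Finset.sum_bij'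
    (fun i (hi : i ∈ range m) => (⟨i, by simp only [mem_range] at hi; omega⟩ : Fin n))
    (fun a (_ : a ∈ univ.filter (fun j : Fin n => (j : ℕ) < m)) => (a : ℕ))
    (fun i hi => by
      simp only [mem_range] at hi
      simp only [mem_filter, mem_univ, true_and]
      exact hi)
    (fun a ha => by
      simp only [mem_filter, mem_univ, true_and] at ha
      simpa using ha)
    (fun i _ => rfl)
    (fun a _ => by apply Fin.ext; rfl)
    (fun i hi => by
      simp only [mem_range] at hi
      rw [dif_pos (by omega : i < n)])

lemma filter_split_sum {n m : ℕ} (f : Fin n → ℝ) :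
    ∑ j ∈ univ.filter (fun j : Fin n => (j : ℕ) < m), f j
      + ∑ j ∈ univ.filter (fun j : Fin n => m ≤ (j : ℕ)), f j = ∑ j, f j := by
  rw [← Finset.sum_filter_add_sum_filter_not univ (fun j : Fin n => (j : ℕ) < m) f]
  congr 1
  apply Finset.sum_congr _ (fun _ _ => rfl)
  apply Finset.filter_congr
  intro j _
  simp [not_lt]


lemma prod_one_sub_exp_le (B : ℕ) (r s : Fin B → ℝ)
    (hr : ∀ i, 0 < r i) (hs : ∀ i, 0 < s i) (hmaj : Majorizes r s)
    (c : ℝ) (hc : 0 < c) :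
    ∏ i, (1 - Real.exp (-(c * r i))) ≤ ∏ i, (1 - Real.exp (-(c * s i))) := by
  classical
  set σ := Tuple.sort r with hσ
  set τ := Tuple.sort s with hτ
  have hrmono : Monotone (r ∘ σ) := Tuple.monotone_sort r
  have hsmono : Monotone (s ∘ τ) := Tuple.monotone_sort s
  set A : ℕ → ℝ := fun i => if h : i < B then c * r (σ ⟨i, h⟩) else 0 with hA
  set A' : ℕ → ℝ := fun i => if h : i < B then c * s (τ ⟨i, h⟩) else 0 with hA'
  -- prefix sums via filters
  have hAsum : ∀ m ≤ B, ∑ i ∈ range m, A i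
      = ∑ j ∈ univ.filter (fun j : Fin B => (j : ℕ) < m), c * r (σ j) :=
    fun m hm => pre_sum_eq hm (fun j => c * r (σ j))
  have hA'sum : ∀ m ≤ B, ∑ i ∈ range m, A' i
      = ∑ j ∈ univ.filter (fun j : Fin B => (j : ℕ) < m), c * s (τ j) :=
    fun m hm => pre_sum_eq hm (fun j => c * s (τ j))
  have hrtot : ∑ j, c * r (σ j) = c * ∑ i, r i := by
    rw [← Finset.mul_sum]
    congr 1
    exact Equiv.sum_comp σ r
  have hstot : ∑ j, c * s (τ j) = c * ∑ i, s i := by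
    rw [← Finset.mul_sum]
    congr 1
    exact Equiv.sum_comp τ s
  -- suffix sum comparison from majorization
  have hsuf : ∀ m ≤ B,
      ∑ j ∈ univ.filter (fun j : Fin B => m ≤ (j : ℕ)), c * s (τ j)
        ≤ ∑ j ∈ univ.filter (fun j : Fin B => m ≤ (j : ℕ)), c * r (σ j) := by
    intro m hm
    set k := B - m with hk
    have hBk : B - k = m := by omega
    have hkB : k ≤ B := by omega
    have hcard : (univ.filter (fun j : Fin B => m ≤ (j : ℕ))).card = k := by
      rw [← hBk]; exact card_filter_ge_fin hkB
    -- the set S of original indices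
    set S : Finset (Fin B) := (univ.filter (fun j : Fin B => m ≤ (j : ℕ))).image τ with hS
    have hScard : S.card = k := by
      rw [hS, Finset.card_image_of_injective _ τ.injective, hcard]
    have hSsum : ∑ i ∈ S, s i = ∑ j ∈ univ.filter (fun j : Fin B => m ≤ (j : ℕ)), s (τ j) := by
      rw [hS, Finset.sum_image (fun x _ y _ h => τ.injective h)]
    obtain ⟨T, hTcard, hTle⟩ := hmaj.2 k hkB S hScard
    have hTsum : ∑ i ∈ T, r i = ∑ j ∈ T.image σ.symm, r (σ j) := by
      rw [Finset.sum_image (fun x _ y _ h => σ.symm.injective h)]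
      apply Finset.sum_congr rfl
      intro x _
      rw [Equiv.apply_symm_apply]
    have hUcard : (T.image σ.symm).card = k := by
      rw [Finset.card_image_of_injective _ σ.symm.injective, hTcard]
    have htop := sum_le_sum_top (fun j => r (σ j)) hrmono (T.image σ.symm) hUcard
    rw [hBk] at htop
    calc ∑ j ∈ univ.filter (fun j : Fin B => m ≤ (j : ℕ)), c * s (τ j)
        = c * ∑ i ∈ S, s i := by rw [hSsum, Finset.mul_sum]
      _ ≤ c * ∑ i ∈ T, r i := by
          apply mul_le_mul_of_nonneg_left hTle hc.le
      _ = c * ∑ j ∈ T.image σ.symm, r (σ j) := by rw [hTsum]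
      _ ≤ c * ∑ j ∈ univ.filter (fun j : Fin B => m ≤ (j : ℕ)), r (σ j) := by
          apply mul_le_mul_of_nonneg_left htop hc.le
      _ = ∑ j ∈ univ.filter (fun j : Fin B => m ≤ (j : ℕ)), c * r (σ j) := by
          rw [Finset.mul_sum]
  have htoteq : ∑ j, c * r (σ j) = ∑ j, c * s (τ j) := by
    rw [hrtot, hstot, hmaj.1]
  -- main Schur inequality
  have hschur := abel_schur B A A'
    (fun i hi => by simp only [hA, dif_pos hi]; exact mul_pos hc (hr _))
    (fun i hi => by simp only [hA', dif_pos hi]; exact mul_pos hc (hs _))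
    (fun i hi => by
      simp only [hA', dif_pos (show i < B by omega), dif_pos hi]
      apply mul_le_mul_of_nonneg_left _ hc.le
      exact hsmono (show (⟨i, by omega⟩ : Fin B) ≤ ⟨i+1, hi⟩ by simp [Fin.le_def]))
    (fun m hm => by
      rw [hAsum m hm, hA'sum m hm]
      have h1 := filter_split_sum (n := B) (m := m) (fun j => c * r (σ j))
      have h2 := filter_split_sum (n := B) (m := m) (fun j => c * s (τ j))
      have h3 := hsuf m hm
      -- ∑ pre r = tot - suf r ≤ tot - suf s = ∑ pre s
      have := htoteq
      linarith)
    (by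
      rw [hAsum B le_rfl, hA'sum B le_rfl]
      rw [Finset.filter_true_of_mem (fun j _ => j.isLt)]
      exact htoteq)
  -- convert sums of gFun to products
  have key : ∀ (f : Fin B → ℝ), (∀ i, 0 < f i) → ∀ (perm : Equiv.Perm (Fin B)),
      ∏ i, (1 - Real.exp (-(c * f i)))
        = Real.exp (∑ i ∈ range B, gFun (if h : i < B then c * f (perm ⟨i, h⟩) else 0)) := by
    intro f hf perm
    have : ∑ i ∈ range B, gFun (if h : i < B then c * f (perm ⟨i, h⟩) else 0)
        = ∑ i : Fin B, gFun (c * f (perm i)) := by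
      rw [← Fin.sum_univ_eq_sum_range (fun i => gFun (if h : i < B then c * f (perm ⟨i, h⟩) else 0)) B]
      apply Finset.sum_congr rfl
      intro i _
      rw [dif_pos i.isLt]
    rw [this]
    have h2 : ∑ i : Fin B, gFun (c * f (perm i)) = ∑ i : Fin B, gFun (c * f i) :=
      Equiv.sum_comp perm (fun i => gFun (c * f i))
    rw [h2, Real.exp_sum]
    apply Finset.prod_congr rfl
    intro i _
    rw [gFun, Real.exp_log (one_sub_exp_pos (mul_pos hc (hf i)))]
  rw [key r hr σ, key s hs τ]
  exact Real.exp_le_exp.2 hschur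

open Set

lemma expMeasure_Iic {ρ : ℝ} (hρ : 0 < ρ) {t : ℝ} (ht : 0 ≤ t) :
    expMeasure ρ (Iic t) = ENNReal.ofReal (1 - rexp (-(ρ * t))) := by
  haveI := isProbabilityMeasure_expMeasure hρ
  rw [← ofReal_cdf (expMeasure ρ) t]
  congr 1
  rw [cdf_expMeasure_eq hρ,
    if_pos ht]

lemma expMeasure_Iio_zero {ρ : ℝ} : expMeasure ρ (Iio 0) = 0 := by
  rw [expMeasure, gammaMeasure, withDensity_apply _ measurableSet_Iio]
  exact lintegral_gammaPDF_of_nonpos le_rfl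

lemma expMeasure_ae_nonneg {ρ : ℝ} : ∀ᵐ y ∂(expMeasure ρ), 0 ≤ y := by
  rw [ae_iff]
  convert expMeasure_Iio_zero (ρ := ρ) using 2
  ext y
  simp [not_le]

lemma one_sub_exp_nonneg {u : ℝ} (hu : 0 ≤ u) : 0 ≤ 1 - rexp (-u) := by
  have : rexp (-u) ≤ rexp 0 := exp_le_exp.2 (by linarith)
  simp only [Real.exp_zero] at this
  linarith

section PiExp

variable {B : ℕ} [Nonempty (Fin B)] {a : Fin B → ℝ}

lemma measurable_sup_coord : Measurable (fun x : Fin B → ℝ => ⨆ i, x i) := by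
  have h : (fun x : Fin B → ℝ => ⨆ i, x i)
      = univ.sup' univ_nonempty (fun i (x : Fin B → ℝ) => x i) := by
    funext x
    rw [Finset.sup'_apply, Finset.sup'_univ_eq_ciSup]
  rw [h]
  exact Finset.measurable_sup' _ (fun i _ => measurable_pi_apply i)

lemma pi_exp_ae_nonneg (ha : ∀ i, 0 < a i) :
    ∀ᵐ x ∂(Measure.pi fun i => expMeasure (a i)), ∀ i, 0 ≤ x i := by
  haveI : ∀ i, IsProbabilityMeasure (expMeasure (a i)) :=
    fun i => isProbabilityMeasure_expMeasure (ha i)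
  rw [ae_all_iff]
  intro i
  exact Measure.tendsto_eval_ae_ae.eventually expMeasure_ae_nonneg

lemma sup_coord_ae_nonneg (ha : ∀ i, 0 < a i) :
    0 ≤ᵐ[Measure.pi fun i => expMeasure (a i)] (fun x : Fin B → ℝ => ⨆ i, x i) := by
  filter_upwards [pi_exp_ae_nonneg ha] with x hx
  have i0 : Fin B := Classical.arbitrary _
  exact le_trans (hx i0) (le_ciSup (Set.Finite.bddAbove (Set.finite_range x)) i0)

lemma pi_exp_tail (ha : ∀ i, 0 < a i) {t : ℝ} (ht : 0 ≤ t) :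
    (Measure.pi fun i => expMeasure (a i)) {x | t < ⨆ i, x i}
      = 1 - ENNReal.ofReal (∏ i, (1 - rexp (-(a i * t)))) := by
  haveI : ∀ i, IsProbabilityMeasure (expMeasure (a i)) :=
    fun i => isProbabilityMeasure_expMeasure (ha i)
  have hset : {x : Fin B → ℝ | t < ⨆ i, x i} = (Set.pi Set.univ fun _ => Iic t)ᶜ := by
    ext x
    have hb : (⨆ i, x i) ≤ t ↔ ∀ i, x i ≤ t :=
      ciSup_le_iff (Set.Finite.bddAbove (Set.finite_range x))
    simp only [mem_compl_iff, mem_setOf_eq, Set.mem_pi, Set.mem_univ, true_implies, Set.mem_Iic]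
    rw [← hb]
    exact not_le.symm
  rw [hset, measure_compl (MeasurableSet.univ_pi (fun _ => measurableSet_Iic))
    (measure_ne_top _ _), Measure.pi_pi, measure_univ]
  congr 1
  rw [Finset.prod_congr rfl fun i (_ : i ∈ Finset.univ) => expMeasure_Iic (ha i) ht,
    ← ENNReal.ofReal_prod_of_nonneg (fun i _ => one_sub_exp_nonneg (mul_nonneg (ha i).le ht))]

lemma pi_exp_coord_tail (ha : ∀ i, 0 < a i) {t : ℝ} (ht : 0 ≤ t) (i : Fin B) :
    (Measure.pi fun i => expMeasure (a i)) {x | t < x i}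
      = ENNReal.ofReal (rexp (-(a i * t))) := by
  haveI : ∀ i, IsProbabilityMeasure (expMeasure (a i)) :=
    fun i => isProbabilityMeasure_expMeasure (ha i)
  have hset : {x : Fin B → ℝ | t < x i} = Function.eval i ⁻¹' (Ioi t) := rfl
  rw [hset, Set.eval_preimage, Measure.pi_pi]
  rw [Finset.prod_eq_single i]
  · rw [Function.update_self]
    have : Ioi t = (Iic t)ᶜ := by ext y; simp [not_le]
    rw [this, measure_compl measurableSet_Iic (measure_ne_top _ _), measure_univ,
      expMeasure_Iic (ha i) ht]
    rw [← ENNReal.ofReal_one, ← ENNReal.ofReal_sub _ (one_sub_exp_nonneg (mul_nonneg (ha i).le ht))]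
    norm_num
  · intro j _ hji
    rw [Function.update_of_ne hji]
    exact measure_univ
  · intro h
    exact absurd (Finset.mem_univ i) h

lemma pi_exp_tail_lintegral_lt_top (ha : ∀ i, 0 < a i) :
    ∫⁻ t in Ioi (0:ℝ), (Measure.pi fun i => expMeasure (a i)) {x | t < ⨆ i, x i} < ⊤ := by
  have hb : ∀ t ∈ Ioi (0:ℝ), (Measure.pi fun i => expMeasure (a i)) {x | t < ⨆ i, x i}
      ≤ ∑ i, ENNReal.ofReal (rexp (-(a i * t))) := by
    intro t ht
    have hsub : {x : Fin B → ℝ | t < ⨆ i, x i} ⊆ ⋃ i, {x : Fin B → ℝ | t < x i} := by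
      intro x hx
      by_contra hc
      simp only [Set.mem_iUnion, mem_setOf_eq, not_exists, not_lt] at hc
      exact absurd (ciSup_le hc) (not_le.2 hx)
    calc (Measure.pi fun i => expMeasure (a i)) {x | t < ⨆ i, x i}
        ≤ (Measure.pi fun i => expMeasure (a i)) (⋃ i, {x : Fin B → ℝ | t < x i}) :=
          measure_mono hsub
      _ ≤ ∑ i, (Measure.pi fun i => expMeasure (a i)) {x : Fin B → ℝ | t < x i} :=
          measure_iUnion_fintype_le _ _
      _ = ∑ i, ENNReal.ofReal (rexp (-(a i * t))) := by
          exact Finset.sum_congr rfl fun i _ => pi_exp_coord_tail ha (le_of_lt ht) i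
  calc ∫⁻ t in Ioi (0:ℝ), (Measure.pi fun i => expMeasure (a i)) {x | t < ⨆ i, x i}
      ≤ ∫⁻ t in Ioi (0:ℝ), ∑ i, ENNReal.ofReal (rexp (-(a i * t))) := by
        apply lintegral_mono_ae
        filter_upwards [ae_restrict_mem measurableSet_Ioi] with t ht
        exact hb t ht
    _ = ∑ i, ∫⁻ t in Ioi (0:ℝ), ENNReal.ofReal (rexp (-(a i * t))) := by
        apply lintegral_finset_sum
        intro i _
        exact ((measurable_id.const_mul (a i)).neg.exp).ennreal_ofReal
    _ < ⊤ := by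
        rw [ENNReal.sum_lt_top]
        intro i _
        have hint : IntegrableOn (fun t : ℝ => rexp (-(a i * t))) (Ioi 0) := by
          have := exp_neg_integrableOn_Ioi 0 (ha i)
          simpa [neg_mul] using this
        exact hint.lintegral_lt_top

end PiExp

/-- Lemma 1: if the batch assignment `r` majorizes the batch assignment `s` (both with
strictly positive entries), then the expected overall service time — the expectation of the
maximum of `B` independent exponential batch recovery times, with rates `λ ⬝ r i`
(resp. `λ ⬝ s i`) — is at least as large for `r` as for `s`. -/
theorem expected_max_service_time_monotone_in_majorization (B : ℕ) (hB : 1 ≤ B)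
    (lam : ℝ) (hlam : 0 < lam) (r s : Fin B → ℝ)
    (hr : ∀ i, 0 < r i) (hs : ∀ i, 0 < s i) (hmaj : Majorizes r s) :
    ∫ x, (⨆ i, x i) ∂(Measure.pi fun i => expMeasure (lam * s i))
      ≤ ∫ x, (⨆ i, x i) ∂(Measure.pi fun i => expMeasure (lam * r i)) := by
  haveI : Nonempty (Fin B) := ⟨⟨0, hB⟩⟩
  have har : ∀ i, 0 < lam * r i := fun i => mul_pos hlam (hr i)
  have has : ∀ i, 0 < lam * s i := fun i => mul_pos hlam (hs i)
  -- rewrite both integrals via lintegrals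
  have heqr : ∫ x, (⨆ i, x i) ∂(Measure.pi fun i => expMeasure (lam * r i))
      = (∫⁻ x, ENNReal.ofReal (⨆ i, x i) ∂(Measure.pi fun i => expMeasure (lam * r i))).toReal :=
    integral_eq_lintegral_of_nonneg_ae (sup_coord_ae_nonneg har)
      measurable_sup_coord.aestronglyMeasurable
  have heqs : ∫ x, (⨆ i, x i) ∂(Measure.pi fun i => expMeasure (lam * s i))
      = (∫⁻ x, ENNReal.ofReal (⨆ i, x i) ∂(Measure.pi fun i => expMeasure (lam * s i))).toReal :=
    integral_eq_lintegral_of_nonneg_ae (sup_coord_ae_nonneg has)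
      measurable_sup_coord.aestronglyMeasurable
  have hlr : ∫⁻ x, ENNReal.ofReal (⨆ i, x i) ∂(Measure.pi fun i => expMeasure (lam * r i))
      = ∫⁻ t in Ioi (0:ℝ), (Measure.pi fun i => expMeasure (lam * r i)) {x | t < ⨆ i, x i} :=
    lintegral_eq_lintegral_meas_lt _ (sup_coord_ae_nonneg har)
      measurable_sup_coord.aemeasurable
  have hls : ∫⁻ x, ENNReal.ofReal (⨆ i, x i) ∂(Measure.pi fun i => expMeasure (lam * s i))
      = ∫⁻ t in Ioi (0:ℝ), (Measure.pi fun i => expMeasure (lam * s i)) {x | t < ⨆ i, x i} :=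
    lintegral_eq_lintegral_meas_lt _ (sup_coord_ae_nonneg has)
      measurable_sup_coord.aemeasurable
  have hmono : ∫⁻ t in Ioi (0:ℝ), (Measure.pi fun i => expMeasure (lam * s i)) {x | t < ⨆ i, x i}
      ≤ ∫⁻ t in Ioi (0:ℝ), (Measure.pi fun i => expMeasure (lam * r i)) {x | t < ⨆ i, x i} := by
    apply lintegral_mono_ae
    filter_upwards [ae_restrict_mem measurableSet_Ioi] with t ht
    rw [pi_exp_tail has (le_of_lt ht), pi_exp_tail har (le_of_lt ht)]
    apply tsub_le_tsub_left
    apply ENNReal.ofReal_le_ofReal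
    have hprod := prod_one_sub_exp_le B r s hr hs hmaj (lam * t) (mul_pos hlam ht)
    simp only [show ∀ u : ℝ, lam * t * u = lam * u * t from fun u => by ring] at hprod
    exact hprod
  have hfin : ∫⁻ t in Ioi (0:ℝ), (Measure.pi fun i => expMeasure (lam * r i)) {x | t < ⨆ i, x i}
      < ⊤ := pi_exp_tail_lintegral_lt_top har
  rw [heqr, heqs, hlr, hls]
  exact ENNReal.toReal_mono (ne_of_lt hfin) hmono
end

section
/- Proposition (lower bound on expected computing time): Let B ≥ 1, λ > 0, and let r : Fin B → ℝ be any vector of strictly positive rates with ∑_i r i = N. Let μ_r be the product measure on (Fin B → ℝ) whose i-th factor is the exponential distribution with rate λ · r i, and let T(r) = ∫ (sup_i x i) dμ_r(x). Then T(r) ≥ (B/(N λ)) · H_B, where H_B = ∑_{k=1}^{B} 1/k is the B-th harmonic number, with equality for the balanced assignment in which every entry of r equals N/B. -/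
open Finset MeasureTheory ProbabilityTheory

section Aux
open Real Set Filter Topology

lemma exp_tend {c : ℝ} (hc : 0 < c) : Tendsto (fun t : ℝ => exp (-(c*t))) atTop (𝓝 0) := by
  have h1 : Tendsto (fun t : ℝ => c * t) atTop atTop :=
    (tendsto_const_mul_atTop_of_pos hc).mpr tendsto_id
  exact tendsto_exp_neg_atTop_nhds_zero.comp h1

lemma exp_prod_integral {c : ℝ} (hc : 0 < c) (n : ℕ) :
    IntegrableOn (fun t => exp (-(c*t)) * (1 - exp (-(c*t)))^n) (Ioi 0) ∧
    ∫ t in Ioi (0:ℝ), exp (-(c*t)) * (1 - exp (-(c*t)))^n = 1 / (c * (n+1)) := by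
  have hint : IntegrableOn (fun t => exp (-(c*t)) * (1 - exp (-(c*t)))^n) (Ioi 0) := by
    refine (exp_neg_integrableOn_Ioi 0 hc).mono' ?_ ?_
    · exact ((continuous_exp.comp (by continuity)).mul
        ((continuous_const.sub (continuous_exp.comp (by continuity))).pow n)).aestronglyMeasurable
    · filter_upwards [ae_restrict_mem measurableSet_Ioi] with t ht
      have h1 : 0 ≤ 1 - exp (-(c*t)) := by
        have : exp (-(c*t)) ≤ 1 := exp_le_one_iff.mpr (by nlinarith [le_of_lt (show (0:ℝ) < t from ht)])
        linarith
      have h2 : (1 - exp (-(c*t)))^n ≤ 1 :=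
        pow_le_one₀ h1 (by nlinarith [exp_pos (-(c*t))])
      have h3 : 0 < exp (-(c*t)) := exp_pos _
      rw [norm_mul, norm_pow]
      rw [norm_of_nonneg h3.le, norm_of_nonneg h1]
      calc exp (-(c*t)) * (1 - exp (-(c*t)))^n ≤ exp (-(c*t)) * 1 := by
            exact mul_le_mul_of_nonneg_left h2 h3.le
        _ = exp (-c * t) := by rw [mul_one]; ring_nf
  refine ⟨hint, ?_⟩
  have hF : ∀ t : ℝ, HasDerivAt (fun t => (1 - exp (-(c*t)))^(n+1) / (c*(n+1)))
      (exp (-(c*t)) * (1 - exp (-(c*t)))^n) t := by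
    intro t
    have h1 : HasDerivAt (fun t : ℝ => 1 - exp (-(c*t))) (exp (-(c*t)) * c) t := by
      have := (((hasDerivAt_id t).const_mul c).neg).exp
      simpa using (this.const_sub 1)
    have h2 := (h1.pow (n+1)).div_const (c*(n+1))
    convert h2 using 1
    case e'_4 => rfl
    case e'_5 => rfl
    case e'_8 => rfl
    have hcn : (c*((n:ℝ)+1)) ≠ 0 := by positivity
    rw [eq_div_iff hcn]; push_cast
    ring
  have hlim : Tendsto (fun t => (1 - exp (-(c*t)))^(n+1) / (c*(n+1))) atTop
      (𝓝 (1 / (c*(n+1)))) := by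
    have h2 : Tendsto (fun t : ℝ => (1 - exp (-(c*t)))^(n+1)) atTop (𝓝 1) := by
      have := ((exp_tend hc).const_sub 1).pow (n+1)
      simpa using this
    simpa using h2.div_const (c*(n+1))
  have := integral_Ioi_of_hasDerivAt_of_tendsto' (fun x _ => hF x) hint hlim
  rw [this]
  norm_num

lemma balanced_integral {c : ℝ} (hc : 0 < c) (B : ℕ) :
    IntegrableOn (fun t => 1 - (1 - exp (-(c*t)))^B) (Ioi 0) ∧
    ∫ t in Ioi (0:ℝ), (1 - (1 - exp (-(c*t)))^B)
      = (∑ k ∈ Finset.Icc 1 B, (1:ℝ)/k) / c := by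
  induction B with
  | zero => simp
  | succ n ih =>
    have key : ∀ t : ℝ, 1 - (1 - exp (-(c*t)))^(n+1)
        = (1 - (1 - exp (-(c*t)))^n) + exp (-(c*t)) * (1 - exp (-(c*t)))^n := by
      intro t; ring
    have h2 := exp_prod_integral hc n
    constructor
    · exact (ih.1.add h2.1).congr (Filter.EventuallyEq.of_eq (funext fun t => (key t).symm))
    · have : ∫ t in Ioi (0:ℝ), (1 - (1 - exp (-(c*t)))^(n+1))
          = ∫ t in Ioi (0:ℝ), ((1 - (1 - exp (-(c*t)))^n) + exp (-(c*t)) * (1 - exp (-(c*t)))^n) :=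
        setIntegral_congr_fun measurableSet_Ioi (fun t _ => key t)
      rw [this, integral_add ih.1 h2.1, ih.2, h2.2, Finset.sum_Icc_succ_top (by omega)]
      have hc' : c ≠ 0 := hc.ne'
      have : ((n:ℝ)+1) ≠ 0 := by positivity
      field_simp
      push_cast; ring


lemma amgm_pointwise {B : ℕ} (hB : 1 ≤ B) (a : Fin B → ℝ) (ha : ∀ i, 0 < a i)
    {t : ℝ} (ht : 0 ≤ t) :
    ∏ i, (1 - exp (-(a i * t))) ≤ (1 - exp (-((∑ i, a i)/B * t)))^B := by
  have hBpos : (0:ℝ) < B := by exact_mod_cast hB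
  set w : ℝ := 1/B with hw
  have hwpos : 0 < w := by positivity
  have hwsum : ∑ _i : Fin B, w = 1 := by
    simp only [Finset.sum_const, Finset.card_univ, Fintype.card_fin, nsmul_eq_mul, hw]
    field_simp
  set z : Fin B → ℝ := fun i => 1 - exp (-(a i * t)) with hz
  have hznn : ∀ i, 0 ≤ z i := fun i => by
    have : exp (-(a i * t)) ≤ 1 :=
      exp_le_one_iff.mpr (neg_nonpos.mpr (mul_nonneg (ha i).le ht))
    simp only [hz]; linarith
  have hgm1 : ∏ i, (z i) ^ w ≤ ∑ i, w * z i :=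
    Real.geom_mean_le_arith_mean_weighted univ (fun _ => w) z
      (fun i _ => hwpos.le) hwsum (fun i _ => hznn i)
  have hpow : ∏ i, z i = (∏ i, (z i) ^ w)^B := by
    rw [← Finset.prod_pow]
    refine Finset.prod_congr rfl (fun i _ => ?_)
    rw [← Real.rpow_natCast ((z i)^w) B, ← Real.rpow_mul (hznn i), hw]
    field_simp; simp
  have hgm2 : exp (-((∑ i, a i)/B * t)) ≤ ∑ i, w * exp (-(a i * t)) := by
    have h := Real.geom_mean_le_arith_mean_weighted univ (fun _ => w)
      (fun i => exp (-(a i * t))) (fun i _ => hwpos.le) hwsum (fun i _ => (exp_pos _).le)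
    have key : ∏ i, (exp (-(a i * t))) ^ w = exp (-((∑ i, a i)/B * t)) := by
      have h1 : ∀ i : Fin B, (exp (-(a i * t))) ^ w = exp (-(a i * t) * w) := fun i => by
        rw [Real.rpow_def_of_pos (exp_pos _), Real.log_exp]
      rw [Finset.prod_congr rfl (fun i _ => h1 i), ← Real.exp_sum]
      congr 1
      have h2 : ∀ i : Fin B, -(a i * t) * w = a i * (-(t*w)) := fun i => by ring
      rw [Finset.sum_congr rfl (fun i _ => h2 i), ← Finset.sum_mul, hw]
      field_simp
    calc exp (-((∑ i, a i)/B * t)) = ∏ i, (exp (-(a i * t))) ^ w := key.symm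
      _ ≤ ∑ i, w * exp (-(a i * t)) := h
  have hsum_z : ∑ i, w * z i = 1 - ∑ i, w * exp (-(a i * t)) := by
    simp only [hz, mul_sub, Finset.sum_sub_distrib, mul_one, hwsum]
  have hstep : ∑ i, w * z i ≤ 1 - exp (-((∑ i, a i)/B * t)) := by
    rw [hsum_z]; linarith
  calc ∏ i, z i = (∏ i, (z i) ^ w)^B := hpow
    _ ≤ (∑ i, w * z i)^B :=
        pow_le_pow_left₀ (Finset.prod_nonneg fun i _ => Real.rpow_nonneg (hznn i) w) hgm1 B
    _ ≤ (1 - exp (-((∑ i, a i)/B * t)))^B :=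
        pow_le_pow_left₀ (Finset.sum_nonneg fun i _ => mul_nonneg hwpos.le (hznn i)) hstep B


lemma integrable_id_expMeasure {c : ℝ} (hc : 0 < c) :
    Integrable (fun x : ℝ => x) (expMeasure c) := by
  have hpdf : ∀ x : ℝ, exponentialPDFReal c x = if 0 ≤ x then c * exp (-(c*x)) else 0 := by
    intro x
    rw [exponentialPDFReal, gammaPDFReal]
    simp [Real.rpow_one, Real.Gamma_one]
  have hIoi : IntegrableOn (fun x : ℝ => x * (c * exp (-(c*x)))) (Ioi 0) := by
    have h := integrableOn_rpow_mul_exp_neg_mul_rpow (p := 1) (s := 1) (b := c)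
      (by norm_num) one_pos hc
    have h2 : IntegrableOn (fun x : ℝ => x * exp (-c * x)) (Ioi 0) := by
      refine h.congr_fun (fun x _ => ?_) measurableSet_Ioi
      norm_num
    have h3 : IntegrableOn (fun x : ℝ => c * (x * exp (-c * x))) (Ioi 0) := h2.const_mul c
    refine h3.congr_fun (fun x _ => ?_) measurableSet_Ioi
    ring_nf
  have hfeq : (fun x : ℝ => x * exponentialPDFReal c x)
      = (Ioi (0:ℝ)).indicator (fun x => x * (c * exp (-(c*x)))) := by
    funext x
    rw [hpdf x, Set.indicator_apply]
    rcases lt_trichotomy x 0 with h | h | h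
    · rw [if_neg (not_le.mpr h), if_neg (by simpa using h.le), mul_zero]
    · subst h; simp
    · rw [if_pos h.le, if_pos (by simpa using h)]
  have hint : Integrable (fun x : ℝ => x * exponentialPDFReal c x) volume := by
    rw [hfeq]
    exact (integrable_indicator_iff measurableSet_Ioi).mpr hIoi
  have : expMeasure c = volume.withDensity (gammaPDF 1 c) := rfl
  rw [this, show (gammaPDF 1 c) = fun x => ENNReal.ofReal (gammaPDFReal 1 c x) from rfl,
    integrable_withDensity_iff ((measurable_gammaPDFReal 1 c).ennreal_ofReal)
    (Eventually.of_forall fun x => ENNReal.ofReal_lt_top)]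
  refine hint.congr (Eventually.of_forall fun x => ?_)
  show x * exponentialPDFReal c x = x * (ENNReal.ofReal (exponentialPDFReal c x)).toReal
  rw [ENNReal.toReal_ofReal (exponentialPDFReal_nonneg hc x)]


lemma exp_max_repr {B : ℕ} (hB : 1 ≤ B) (a : Fin B → ℝ) (ha : ∀ i, 0 < a i) :
    Integrable (fun x : Fin B → ℝ => ⨆ i, x i) (Measure.pi fun i => expMeasure (a i)) ∧
    ∫ x, (⨆ i, x i) ∂(Measure.pi fun i => expMeasure (a i))
      = ∫ t in Ioi (0:ℝ), (1 - ∏ i, (1 - exp (-(a i * t)))) := by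
  haveI : NeZero B := ⟨by omega⟩
  haveI hprob : ∀ i, IsProbabilityMeasure (expMeasure (a i)) :=
    fun i => isProbabilityMeasure_expMeasure (ha i)
  set μ := Measure.pi fun i : Fin B => expMeasure (a i) with hμ
  haveI : IsProbabilityMeasure μ := by rw [hμ]; infer_instance
  have hmeas_sup : Measurable (fun x : Fin B → ℝ => ⨆ i, x i) :=
    Measurable.iSup (fun i => measurable_pi_apply i)
  have hmap : ∀ i, μ.map (fun x => x i) = expMeasure (a i) := by
    intro i
    ext s hs
    rw [Measure.map_apply (measurable_pi_apply i) hs]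
    have hpre : (fun x : Fin B → ℝ => x i) ⁻¹' s
        = Set.pi univ (Function.update (fun _ => (univ : Set ℝ)) i s) := Set.eval_preimage
    rw [hpre, hμ, Measure.pi_pi]
    refine Finset.prod_eq_single i (fun j _ hj => ?_) (fun h => absurd (Finset.mem_univ i) h) |>.trans ?_
    · rw [Function.update_of_ne hj]; exact measure_univ
    · rw [Function.update_self]
  have hint_coord : ∀ i, Integrable (fun x : Fin B → ℝ => x i) μ := by
    intro i
    have h1 : Integrable (fun x : ℝ => x) (μ.map (fun x => x i)) :=
      (hmap i).symm ▸ integrable_id_expMeasure (ha i)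
    have h2 := (integrable_map_measure (f := fun x : Fin B → ℝ => x i) (g := fun x : ℝ => x)
      aestronglyMeasurable_id (measurable_pi_apply i).aemeasurable).mp h1
    exact h2
  have hint_sum : Integrable (fun x : Fin B → ℝ => ∑ i, |x i|) μ :=
    integrable_finset_sum _ (fun i _ => (hint_coord i).abs)
  have hbound : ∀ x : Fin B → ℝ, |⨆ i, x i| ≤ ∑ i, |x i| := by
    intro x
    have hbd : BddAbove (Set.range x) := (Set.finite_range x).bddAbove
    rw [abs_le]
    refine ⟨?_, ciSup_le (fun i => (le_abs_self _).trans
      (Finset.single_le_sum (f := fun j => |x j|) (fun j _ => abs_nonneg _) (Finset.mem_univ i)))⟩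
    have h1 : |x ⟨0, by omega⟩| ≤ ∑ i, |x i| :=
      Finset.single_le_sum (f := fun j => |x j|) (fun j _ => abs_nonneg _) (Finset.mem_univ _)
    have h2 : x ⟨0, by omega⟩ ≤ ⨆ i, x i := le_ciSup hbd _
    have := neg_abs_le (x ⟨0, by omega⟩)
    linarith
  have hint_sup : Integrable (fun x : Fin B → ℝ => ⨆ i, x i) μ :=
    hint_sum.mono' hmeas_sup.aestronglyMeasurable
      (Eventually.of_forall fun x => by rw [Real.norm_eq_abs]; exact hbound x)
  have hae_nn : ∀ i, ∀ᵐ x ∂μ, 0 ≤ x i := by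
    intro i
    rw [ae_iff]
    have hset : {x : Fin B → ℝ | ¬ 0 ≤ x i} = (fun x : Fin B → ℝ => x i) ⁻¹' (Iio 0) := by
      ext x; simp [not_le]
    rw [hset, ← Measure.map_apply (measurable_pi_apply i) measurableSet_Iio, hmap i]
    have : expMeasure (a i) (Iio 0) = ∫⁻ y in Iio (0:ℝ), exponentialPDF (a i) y := by
      rw [show expMeasure (a i) = volume.withDensity (exponentialPDF (a i)) from rfl,
        withDensity_apply _ measurableSet_Iio]
    rw [this, lintegral_exponentialPDF_of_nonpos le_rfl]
  have hnn : 0 ≤ᵐ[μ] fun x : Fin B → ℝ => ⨆ i, x i := by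
    have := (ae_all_iff).mpr hae_nn
    filter_upwards [this] with x hx
    exact le_trans (hx ⟨0, by omega⟩) (le_ciSup ((Set.finite_range x).bddAbove) _)
  refine ⟨hint_sup, ?_⟩
  rw [hint_sup.integral_eq_integral_meas_lt hnn]
  refine setIntegral_congr_fun measurableSet_Ioi (fun t ht => ?_)
  have ht' : (0:ℝ) < t := ht
  set A : Set (Fin B → ℝ) := {x | (⨆ i, x i) ≤ t} with hA
  have hAmeas : MeasurableSet A := measurableSet_le hmeas_sup measurable_const
  have hAset : A = Set.pi univ (fun _ => Iic t) := by
    ext x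
    simp only [hA, Set.mem_setOf_eq, Set.mem_pi, Set.mem_univ, forall_true_left, Set.mem_Iic,
      true_implies]
    exact ciSup_le_iff ((Set.finite_range x).bddAbove)
  have hfactor : ∀ i, expMeasure (a i) (Iic t) = ENNReal.ofReal (1 - exp (-(a i * t))) := by
    intro i
    rw [← ofReal_cdf (expMeasure (a i)) t]
    congr 1
    rw [cdf_expMeasure_eq (ha i) t, if_pos ht'.le]
  have hApi : μ A = ∏ i, ENNReal.ofReal (1 - exp (-(a i * t))) := by
    rw [hAset, hμ, Measure.pi_pi]
    exact Finset.prod_congr rfl (fun i _ => hfactor i)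
  have hcompl : {x : Fin B → ℝ | t < ⨆ i, x i} = Aᶜ := by
    ext x; simp [hA, not_le]
  rw [hcompl, probReal_compl_eq_one_sub hAmeas, measureReal_def, hApi]
  have hle1 : ∀ i, ENNReal.ofReal (1 - exp (-(a i * t))) ≤ 1 := fun i =>
    ENNReal.ofReal_le_one.mpr (by linarith [exp_pos (-(a i * t))])
  have hprodle : ∏ i, ENNReal.ofReal (1 - exp (-(a i * t))) ≤ 1 :=
    Finset.prod_le_one (fun i _ => zero_le) (fun i _ => hle1 i)
  rw [ENNReal.toReal_prod]
  congr 1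
  refine Finset.prod_congr rfl (fun i _ => ?_)
  refine ENNReal.toReal_ofReal ?_
  have : exp (-(a i * t)) ≤ 1 :=
    exp_le_one_iff.mpr (neg_nonpos.mpr (mul_nonneg (ha i).le ht'.le))
  linarith


lemma weierstrass_ineq {ι : Type*} (s : Finset ι) (f : ι → ℝ)
    (h0 : ∀ i ∈ s, 0 ≤ f i) (h1 : ∀ i ∈ s, f i ≤ 1) :
    1 - ∑ i ∈ s, f i ≤ ∏ i ∈ s, (1 - f i) := by
  induction s using Finset.cons_induction with
  | empty => simp
  | cons a s ha ih =>
    rw [Finset.sum_cons, Finset.prod_cons]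
    have h0a := h0 a (Finset.mem_cons_self a s)
    have h1a := h1 a (Finset.mem_cons_self a s)
    have ih' := ih (fun i hi => h0 i (Finset.mem_cons.mpr (Or.inr hi)))
      (fun i hi => h1 i (Finset.mem_cons.mpr (Or.inr hi)))
    have hsnn : 0 ≤ ∑ i ∈ s, f i :=
      Finset.sum_nonneg (fun i hi => h0 i (Finset.mem_cons.mpr (Or.inr hi)))
    nlinarith
/-- Lower bound on the expected computing time: for any positive batch assignment
`r : Fin B → ℝ` with `∑ i, r i = N`, the expected maximum of the `B` independent
exponential batch recovery times with rates `λ ⬝ r i` is at least `(B/(N λ)) ⬝ H_B`,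
where `H_B` is the `B`-th harmonic number, with equality for the balanced assignment
in which every entry of `r` equals `N / B`. -/
theorem expected_computing_time_lower_bound (B : ℕ) (hB : 1 ≤ B)
    (lam N : ℝ) (hlam : 0 < lam) (r : Fin B → ℝ)
    (hr : ∀ i, 0 < r i) (hsum : ∑ i, r i = N) :
    ((B : ℝ) / (N * lam) * ∑ k ∈ Finset.Icc 1 B, (1 : ℝ) / k
        ≤ ∫ x, (⨆ i, x i) ∂(Measure.pi fun i => expMeasure (lam * r i)))
    ∧
    ((∀ i, r i = N / B) →
      ∫ x, (⨆ i, x i) ∂(Measure.pi fun i => expMeasure (lam * r i))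
        = (B : ℝ) / (N * lam) * ∑ k ∈ Finset.Icc 1 B, (1 : ℝ) / k) := by
  haveI : NeZero B := ⟨by omega⟩
  have hBpos : (0:ℝ) < B := by exact_mod_cast hB
  have hN : 0 < N := by
    rw [← hsum]
    exact Finset.sum_pos (fun i _ => hr i) Finset.univ_nonempty
  set a : Fin B → ℝ := fun i => lam * r i with haa
  have ha : ∀ i, 0 < a i := fun i => mul_pos hlam (hr i)
  have hsuma : ∑ i, a i = lam * N := by
    rw [haa, ← Finset.mul_sum, hsum]
  set c : ℝ := lam * N / B with hc
  have hcpos : 0 < c := by positivity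
  set S : ℝ := ∑ k ∈ Finset.Icc 1 B, (1:ℝ)/k with hS
  have hSc : S / c = (B : ℝ) / (N * lam) * S := by
    rw [hc]; field_simp
  obtain ⟨hrepr_int, hrepr⟩ := exp_max_repr hB a ha
  obtain ⟨hbal_int, hbal⟩ := balanced_integral hcpos B
  -- pointwise comparison on Ioi 0
  have hptwise : ∀ t : ℝ, 0 < t →
      1 - (1 - exp (-(c*t)))^B ≤ 1 - ∏ i, (1 - exp (-(a i * t))) := by
    intro t ht
    have := amgm_pointwise hB a ha ht.le
    rw [hsuma] at this
    have hcb : lam * N / (B:ℝ) = c := by rw [hc]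
    rw [hcb] at this
    linarith
  -- bounds for integrand
  have h01 : ∀ t : ℝ, 0 ≤ t → (0 ≤ 1 - ∏ i, (1 - exp (-(a i * t)))
      ∧ 1 - ∏ i, (1 - exp (-(a i * t))) ≤ ∑ i, exp (-(a i * t))) := by
    intro t ht
    have hfle : ∀ i : Fin B, exp (-(a i * t)) ≤ 1 := fun i =>
      exp_le_one_iff.mpr (neg_nonpos.mpr (mul_nonneg (ha i).le ht))
    constructor
    · have : ∏ i, (1 - exp (-(a i * t))) ≤ 1 :=
        Finset.prod_le_one (fun i _ => by linarith [hfle i]) (fun i _ => by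
          linarith [exp_pos (-(a i * t))])
      linarith
    · have := weierstrass_ineq Finset.univ (fun i : Fin B => exp (-(a i * t)))
        (fun i _ => (exp_pos _).le) (fun i _ => hfle i)
      linarith
  -- integrability of the true integrand on Ioi 0
  have hdom : IntegrableOn (fun t : ℝ => ∑ i, exp (-(a i * t))) (Ioi 0) := by
    refine integrable_finset_sum _ (fun i _ => ?_)
    have := exp_neg_integrableOn_Ioi 0 (ha i)
    refine this.congr_fun (fun t _ => ?_) measurableSet_Ioi
    ring_nf
  have hIntOn : IntegrableOn (fun t : ℝ => 1 - ∏ i, (1 - exp (-(a i * t)))) (Ioi 0) := by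
    refine hdom.mono' ?_ ?_
    · refine Continuous.aestronglyMeasurable ?_
      continuity
    · filter_upwards [ae_restrict_mem measurableSet_Ioi] with t ht
      obtain ⟨h1, h2⟩ := h01 t (le_of_lt ht)
      rw [Real.norm_eq_abs, abs_of_nonneg h1]
      exact h2
  constructor
  · -- lower bound
    rw [hrepr]
    calc (B : ℝ) / (N * lam) * S = S / c := hSc.symm
      _ = ∫ t in Ioi (0:ℝ), (1 - (1 - exp (-(c*t)))^B) := hbal.symm
      _ ≤ ∫ t in Ioi (0:ℝ), (1 - ∏ i, (1 - exp (-(a i * t)))) := by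
          refine setIntegral_mono_on hbal_int hIntOn measurableSet_Ioi (fun t ht => ?_)
          exact hptwise t ht
  · -- equality in the balanced case
    intro heq
    have haeq : ∀ i, a i = c := by
      intro i
      show lam * r i = c
      rw [heq i, hc]
      field_simp
    rw [hrepr]
    have : ∀ t : ℝ, (1 - ∏ i, (1 - exp (-(a i * t)))) = 1 - (1 - exp (-(c*t)))^B := by
      intro t
      congr 1
      rw [Finset.prod_congr rfl (fun i _ => by rw [haeq i]), Finset.prod_const,
        Finset.card_univ, Fintype.card_fin]
    rw [show (fun t : ℝ => 1 - ∏ i, (1 - exp (-(a i * t))))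
        = fun t : ℝ => 1 - (1 - exp (-(c*t)))^B from funext this] at *
    calc ∫ t in Ioi (0:ℝ), (1 - (1 - exp (-(c*t)))^B) = S / c := hbal
      _ = (B : ℝ) / (N * lam) * S := hSc

end Aux
end

section
/- Let X₂, X₃, X₄, X₅, X₆ be i.i.d. exponential random variables with rate λ > 0 (formally, coordinates of the product on (Fin 5 → ℝ) of five copies of the exponential distribution with rate λ). Define the overall result generating times T_a = min( max(X₃, X₅), max(X₂, X₄, X₆) ) for the cyclic batching policy (a) and T_b = min( max(X₃, min(X₅, X₆)), max(max(X₂, X₄), min(X₅, X₆)) ) for the partially overlapping batching policy (b). Then E[T_b] < E[T_a]. -/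
open MeasureTheory ProbabilityTheory

section Aux

open Real Set

lemma expMeasure_eq_withDensity (lam : ℝ) :
    expMeasure lam = MeasureTheory.volume.withDensity (gammaPDF 1 lam) := rfl

lemma integrable_id_expMeasure_s11 {lam : ℝ} (hlam : 0 < lam) :
    Integrable id (expMeasure lam) := by
  have hmeas : Measurable (gammaPDF 1 lam) :=
    (measurable_gammaPDFReal 1 lam).ennreal_ofReal
  rw [expMeasure_eq_withDensity,
    integrable_withDensity_iff hmeas (Filter.Eventually.of_forall fun x => ENNReal.ofReal_lt_top)]
  have h1 : IntegrableOn (fun x : ℝ => x ^ (1:ℝ) * exp (-lam * x ^ (1:ℝ))) (Ioi 0) :=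
    integrableOn_rpow_mul_exp_neg_mul_rpow (by norm_num) zero_lt_one hlam
  have h2 : IntegrableOn (fun x : ℝ => lam * (x * exp (-(lam * x)))) (Ioi 0) := by
    refine IntegrableOn.congr_fun (h1.const_mul lam) (fun x _ => ?_) measurableSet_Ioi
    rw [rpow_one]; ring_nf
  have heq : (fun x : ℝ => id x * (gammaPDF 1 lam x).toReal)
      = Set.indicator (Ioi 0) (fun x : ℝ => lam * (x * exp (-(lam * x)))) := by
    funext x
    rcases lt_trichotomy x 0 with hx | hx | hx
    · rw [Set.indicator_of_notMem (by simpa using hx.le.not_gt), gammaPDF_of_neg hx]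
      simp
    · subst hx
      rw [Set.indicator_of_notMem (by simp)]
      simp
    · rw [Set.indicator_of_mem (Set.mem_Ioi.mpr hx), gammaPDF_of_nonneg hx.le, id_eq,
        ENNReal.toReal_ofReal (by positivity)]
      simp only [Real.Gamma_one, Real.rpow_one, sub_self, Real.rpow_zero]
      ring
  rw [heq, integrable_indicator_iff measurableSet_Ioi]
  exact h2

lemma map_eval_pi_expMeasure {lam : ℝ} (hlam : 0 < lam) (i : Fin 5) :
    (Measure.pi fun _ : Fin 5 => expMeasure lam).map (fun x => x i) = expMeasure lam := by
  classical
  haveI hprob : IsProbabilityMeasure (expMeasure lam) := isProbabilityMeasure_expMeasure hlam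
  refine Measure.ext fun s hs => ?_
  rw [Measure.map_apply (measurable_pi_apply i) hs]
  have hpre : (fun x : Fin 5 → ℝ => x i) ⁻¹' s
      = Set.pi Set.univ (Function.update (fun _ : Fin 5 => (Set.univ : Set ℝ)) i s) :=
    Set.eval_preimage
  rw [hpre, Measure.pi_pi]
  rw [Fintype.prod_eq_single i (fun j hj => by
    rw [Function.update_of_ne hj]; exact measure_univ)]
  rw [Function.update_self]

lemma integrable_eval_pi {lam : ℝ} (hlam : 0 < lam) (i : Fin 5) :
    Integrable (fun x : Fin 5 → ℝ => x i)
      (Measure.pi fun _ : Fin 5 => expMeasure lam) := by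
  have h1 : Integrable id ((Measure.pi fun _ : Fin 5 => expMeasure lam).map (fun x => x i)) := by
    rw [map_eval_pi_expMeasure hlam i]; exact integrable_id_expMeasure_s11 hlam
  exact (integrable_map_measure aestronglyMeasurable_id
    (measurable_pi_apply i).aemeasurable).mp h1

lemma abs_min_le_sum (a b : ℝ) : |min a b| ≤ |a| + |b| := by
  rcases min_choice a b with h | h <;> rw [h]
  · exact le_add_of_nonneg_right (abs_nonneg b)
  · exact le_add_of_nonneg_left (abs_nonneg a)

lemma abs_max_le_sum (a b : ℝ) : |max a b| ≤ |a| + |b| := by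
  rcases max_choice a b with h | h <;> rw [h]
  · exact le_add_of_nonneg_right (abs_nonneg b)
  · exact le_add_of_nonneg_left (abs_nonneg a)

lemma expMeasure_Ioo_pos {lam a b : ℝ} (hlam : 0 < lam) (ha : 0 ≤ a) (hab : a < b) :
    0 < expMeasure lam (Set.Ioo a b) := by
  have hmeas : Measurable (gammaPDF 1 lam) :=
    (measurable_gammaPDFReal 1 lam).ennreal_ofReal
  rw [expMeasure_eq_withDensity, pos_iff_ne_zero, Ne, withDensity_apply_eq_zero hmeas]
  have hsub : Set.Ioo a b ⊆ {x | gammaPDF 1 lam x ≠ 0} := by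
    intro x hx
    have hxpos : 0 < x := lt_of_le_of_lt ha hx.1
    have := gammaPDFReal_pos (x := x) zero_lt_one hlam hxpos
    simp only [Set.mem_setOf_eq, gammaPDF, Ne, ENNReal.ofReal_eq_zero, not_le]
    exact this
  have : {x | gammaPDF 1 lam x ≠ 0} ∩ Set.Ioo a b = Set.Ioo a b :=
    Set.inter_eq_self_of_subset_right hsub
  rw [this]
  simp [Real.volume_Ioo, hab, sub_pos]

end Aux

/-- Six-worker example: with `X₂, …, X₆` i.i.d. exponential with rate `λ > 0`
(coordinates `x 0, …, x 4`), the expected overall result generating time of the partially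
overlapping batching policy (b), `T_b = min(max(X₃, min(X₅,X₆)), max(max(X₂,X₄), min(X₅,X₆)))`,
is strictly smaller than that of the cyclic batching policy (a),
`T_a = min(max(X₃,X₅), max(X₂,X₄,X₆))`. -/
theorem overlapping_beats_cyclic (lam : ℝ) (hlam : 0 < lam) :
    ∫ x : Fin 5 → ℝ,
        min (max (x 1) (min (x 3) (x 4))) (max (max (x 0) (x 2)) (min (x 3) (x 4)))
        ∂(Measure.pi fun _ : Fin 5 => expMeasure lam)
      < ∫ x : Fin 5 → ℝ,
        min (max (x 1) (x 3)) (max (x 0) (max (x 2) (x 4)))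
        ∂(Measure.pi fun _ : Fin 5 => expMeasure lam) := by
  haveI hprob : IsProbabilityMeasure (expMeasure lam) := isProbabilityMeasure_expMeasure hlam
  set μ := Measure.pi fun _ : Fin 5 => expMeasure lam with hμ
  set f : (Fin 5 → ℝ) → ℝ := fun x =>
    min (max (x 1) (min (x 3) (x 4))) (max (max (x 0) (x 2)) (min (x 3) (x 4))) with hf
  set g : (Fin 5 → ℝ) → ℝ := fun x =>
    min (max (x 1) (x 3)) (max (x 0) (max (x 2) (x 4))) with hg
  -- measurability
  have hfm : Measurable f := by
    apply Measurable.min <;> apply Measurable.max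
    · exact measurable_pi_apply 1
    · exact (measurable_pi_apply 3).min (measurable_pi_apply 4)
    · exact (measurable_pi_apply 0).max (measurable_pi_apply 2)
    · exact (measurable_pi_apply 3).min (measurable_pi_apply 4)
  have hgm : Measurable g := by
    apply Measurable.min
    · exact (measurable_pi_apply 1).max (measurable_pi_apply 3)
    · exact (measurable_pi_apply 0).max ((measurable_pi_apply 2).max (measurable_pi_apply 4))
  -- integrable bound
  have hbound : Integrable (fun x : Fin 5 → ℝ => ∑ i : Fin 5, 2 * |x i|) μ :=
    integrable_finset_sum _ fun i _ => ((integrable_eval_pi hlam i).abs.const_mul 2)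
  have habs : ∀ x : Fin 5 → ℝ, |f x| ≤ ∑ i : Fin 5, 2 * |x i| ∧
      |g x| ≤ ∑ i : Fin 5, 2 * |x i| := by
    intro x
    have h34 := abs_min_le_sum (x 3) (x 4)
    have h1 := abs_max_le_sum (x 1) (min (x 3) (x 4))
    have h02 := abs_max_le_sum (x 0) (x 2)
    have h2 := abs_max_le_sum (max (x 0) (x 2)) (min (x 3) (x 4))
    have hfx := abs_min_le_sum (max (x 1) (min (x 3) (x 4)))
      (max (max (x 0) (x 2)) (min (x 3) (x 4)))
    have h13 := abs_max_le_sum (x 1) (x 3)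
    have h24 := abs_max_le_sum (x 2) (x 4)
    have h024 := abs_max_le_sum (x 0) (max (x 2) (x 4))
    have hgx := abs_min_le_sum (max (x 1) (x 3)) (max (x 0) (max (x 2) (x 4)))
    have h0 := abs_nonneg (x 0)
    have h1' := abs_nonneg (x 1)
    have h2' := abs_nonneg (x 2)
    have h3' := abs_nonneg (x 3)
    have h4' := abs_nonneg (x 4)
    rw [Fin.sum_univ_five]
    constructor <;> [skip; skip] <;>
      simp only [hf, hg] <;> linarith
  have hfi : Integrable f μ :=
    (hbound.mono' hfm.aestronglyMeasurable
      (Filter.Eventually.of_forall fun x => (habs x).1))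
  have hgi : Integrable g μ :=
    (hbound.mono' hgm.aestronglyMeasurable
      (Filter.Eventually.of_forall fun x => (habs x).2))
  -- pointwise f ≤ g
  have hle : ∀ x : Fin 5 → ℝ, f x ≤ g x := by
    intro x
    apply le_min
    · exact le_trans (min_le_left _ _) (max_le_max le_rfl (min_le_left _ _))
    · refine le_trans (min_le_right _ _) (max_le ?_ ?_)
      · exact max_le (le_max_left _ _) (le_trans (le_max_left _ _) (le_max_right _ _))
      · exact le_trans (min_le_right _ _) (le_trans (le_max_right _ _) (le_max_right _ _))
  -- the box where g - f > 0
  set t : Fin 5 → Set ℝ := ![Set.Ioo 2 3, Set.Ioo 0 1, Set.Ioo 2 3, Set.Ioo 4 5, Set.Ioo 0 1]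
    with ht
  have hbox : ∀ x ∈ Set.pi Set.univ t, f x < 1 ∧ 2 < g x := by
    intro x hx
    have h0 := hx 0 (Set.mem_univ _)
    have h1 := hx 1 (Set.mem_univ _)
    have h2 := hx 2 (Set.mem_univ _)
    have h3 := hx 3 (Set.mem_univ _)
    have h4 := hx 4 (Set.mem_univ _)
    simp only [ht, Matrix.cons_val_zero, Matrix.cons_val_one, Matrix.head_cons,
      Matrix.cons_val_two, Matrix.tail_cons, Matrix.cons_val_three, Matrix.cons_val_four,
      Set.mem_Ioo] at h0 h1 h2 h3 h4
    constructor
    · simp only [hf]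
      apply lt_of_le_of_lt (min_le_left _ _)
      apply max_lt h1.2
      exact lt_of_le_of_lt (min_le_right _ _) h4.2
    · simp only [hg]
      apply lt_min
      · exact lt_of_lt_of_le (show (2:ℝ) < x 3 by linarith) (le_max_right _ _)
      · exact lt_of_lt_of_le h0.1 (le_max_left _ _)
  -- positive measure of the box
  have hμbox : 0 < μ (Set.pi Set.univ t) := by
    rw [hμ, Measure.pi_pi]
    rw [CanonicallyOrderedAdd.prod_pos]
    intro i _
    fin_cases i <;>
      simp only [ht, Matrix.cons_val_zero, Matrix.cons_val_one, Matrix.head_cons,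
        Matrix.cons_val_two, Matrix.tail_cons, Matrix.cons_val_three, Matrix.cons_val_four] <;>
      [exact expMeasure_Ioo_pos hlam (by norm_num) (by norm_num);
       exact expMeasure_Ioo_pos hlam le_rfl (by norm_num);
       exact expMeasure_Ioo_pos hlam (by norm_num) (by norm_num);
       exact expMeasure_Ioo_pos hlam (by norm_num) (by norm_num);
       exact expMeasure_Ioo_pos hlam le_rfl (by norm_num)]
  -- 0 < ∫ (g - f)
  have hdiff : Integrable (fun x => g x - f x) μ := hgi.sub hfi
  have hpos : 0 < ∫ x, (g x - f x) ∂μ := by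
    rw [integral_pos_iff_support_of_nonneg (fun x => sub_nonneg.mpr (hle x)) hdiff]
    refine lt_of_lt_of_le hμbox (measure_mono ?_)
    intro x hx
    have h := hbox x hx
    simp only [Function.mem_support, Ne, sub_eq_zero]
    intro heq
    linarith [h.1, h.2]
  have : ∫ x, (g x - f x) ∂μ = (∫ x, g x ∂μ) - ∫ x, f x ∂μ := integral_sub hgi hfi
  rw [this] at hpos
  linarith
end

section
/- Let X₂, X₃, X₄, X₅, X₆ be i.i.d. exponential random variables with rate λ > 0 (formally, coordinates of the product on (Fin 5 → ℝ) of five copies of the exponential distribution with rate λ). Define T_b = min( max(X₃, min(X₅, X₆)), max(max(X₂, X₄), min(X₅, X₆)) ) for the partially overlapping batching policy (b) and T_c = max( min(X₃, X₄), min(X₅, X₆) ) for the non-overlapping balanced batching policy (c). Then E[T_c] < E[T_b]. -/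
open MeasureTheory ProbabilityTheory

section Aux

open Real Set

private lemma expSurv' {lam : ℝ} (hlam : 0 < lam) {t : ℝ} (ht : 0 ≤ t) :
    expMeasure lam (Ioi t) = ENNReal.ofReal (exp (-(lam * t))) := by
  have hprob : IsProbabilityMeasure (expMeasure lam) := isProbabilityMeasure_expMeasure hlam
  have hIic : expMeasure lam (Iic t) = ENNReal.ofReal (1 - exp (-(lam * t))) := by
    have h1 : cdf (expMeasure lam) t = 1 - exp (-(lam * t)) := by
      have := cdf_expMeasure_eq hlam t
      rw [this, if_pos ht]
    have h2 := cdf_eq_real (μ := expMeasure lam) t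
    rw [h1] at h2
    rw [h2, measureReal_def, ENNReal.ofReal_toReal (measure_ne_top _ _)]
  have hc : Ioi t = (Iic t)ᶜ := by simp
  have hnn : 0 ≤ 1 - exp (-(lam * t)) := by
    have : exp (-(lam * t)) ≤ 1 := exp_le_one_iff.mpr (by nlinarith)
    linarith
  rw [hc, measure_compl measurableSet_Iic (measure_ne_top _ _), hIic, measure_univ,
    ← ENNReal.ofReal_one, ← ENNReal.ofReal_sub _ hnn]
  ring_nf

private lemma piEvent' {lam : ℝ} (hlam : 0 < lam) (S : Finset (Fin 5)) {t : ℝ} (ht : 0 ≤ t) :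
    (Measure.pi fun _ : Fin 5 => expMeasure lam) {x | ∀ i ∈ S, t < x i}
      = ENNReal.ofReal (exp (-(lam * t))) ^ S.card := by
  have hprob : IsProbabilityMeasure (expMeasure lam) := isProbabilityMeasure_expMeasure hlam
  have hset : {x : Fin 5 → ℝ | ∀ i ∈ S, t < x i}
      = Set.pi univ (fun i => if i ∈ S then Ioi t else univ) := by
    ext x
    simp only [Set.mem_setOf_eq, Set.mem_pi, Set.mem_univ, forall_true_left]
    constructor
    · intro h i; split_ifs with hi
      · exact h i hi
      · trivial
    · intro h i hi; have := h i; rw [if_pos hi] at this; exact this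
  rw [hset, Measure.pi_pi]
  have : ∀ i : Fin 5, expMeasure lam (if i ∈ S then Ioi t else univ)
      = if i ∈ S then ENNReal.ofReal (exp (-(lam * t))) else 1 := by
    intro i; split_ifs
    · exact expSurv' hlam ht
    · simp
  simp_rw [this]
  rw [Finset.prod_ite_mem, Finset.univ_inter, Finset.prod_const]

private lemma aeNonneg' {lam : ℝ} (hlam : 0 < lam) :
    ∀ᵐ x ∂(Measure.pi fun _ : Fin 5 => expMeasure lam), ∀ i, 0 ≤ x i := by
  have hprob : IsProbabilityMeasure (expMeasure lam) := isProbabilityMeasure_expMeasure hlam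
  rw [MeasureTheory.ae_all_iff]
  intro i
  have hzero : expMeasure lam (Iio 0) = 0 := by
    rw [expMeasure, gammaMeasure, withDensity_apply _ measurableSet_Iio]
    exact lintegral_gammaPDF_of_nonpos le_rfl
  have hset : {x : Fin 5 → ℝ | ¬ 0 ≤ x i}
      = Set.pi univ (fun j => if j = i then Iio 0 else univ) := by
    ext x
    simp only [Set.mem_setOf_eq, Set.mem_pi, Set.mem_univ, forall_true_left, not_le]
    constructor
    · intro h j; split_ifs with hj
      · subst hj; exact h
      · trivial
    · intro h; have := h i; rw [if_pos rfl] at this; exact this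
  rw [ae_iff, hset, Measure.pi_pi]
  apply Finset.prod_eq_zero (Finset.mem_univ i)
  rw [if_pos rfl, hzero]

private lemma measInf' (S : Finset (Fin 5)) (hS : S.Nonempty) :
    Measurable fun x : Fin 5 → ℝ => S.inf' hS fun i => x i := by
  induction hS using Finset.Nonempty.cons_induction with
  | singleton a => simpa using measurable_pi_apply a
  | cons a s ha hs ih =>
      rw [show (fun x : Fin 5 → ℝ =>
            (Finset.cons a s ha).inf' (Finset.cons_nonempty ha) fun i => x i)
          = fun x => x a ⊓ s.inf' hs (fun i => x i)
        from funext fun x => Finset.inf'_cons hs (fun i => x i)]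
      exact (measurable_pi_apply a).inf ih

private lemma expIntIoi' {c : ℝ} (hc : 0 < c) :
    ∫ t in Ioi (0:ℝ), exp (-(c * t)) = 1 / c := by
  have := integral_comp_mul_left_Ioi (fun u => exp (-u)) 0 hc
  simp only [mul_zero] at this
  rw [integral_exp_neg_Ioi] at this
  simp only [neg_zero, exp_zero, smul_eq_mul, mul_one] at this
  rw [show (fun t => exp (-(c*t))) = fun x : ℝ => (fun u => exp (-u)) (c*x) from rfl, this,
    one_div]

private lemma infKey' (lam : ℝ) (hlam : 0 < lam) (S : Finset (Fin 5)) (hS : S.Nonempty) :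
    Integrable (fun x : Fin 5 → ℝ => S.inf' hS fun i => x i)
        (Measure.pi fun _ : Fin 5 => expMeasure lam) ∧
    ∫ x : Fin 5 → ℝ, S.inf' hS (fun i => x i)
        ∂(Measure.pi fun _ : Fin 5 => expMeasure lam) = 1 / (S.card * lam) := by
  set μ := Measure.pi fun _ : Fin 5 => expMeasure lam with hμ
  set f : (Fin 5 → ℝ) → ℝ := fun x => S.inf' hS fun i => x i with hfdef
  have hf : Measurable f := measInf' S hS
  have hnn : 0 ≤ᵐ[μ] f := (aeNonneg' hlam).mono fun x hx =>
    Finset.le_inf' hS _ fun i _ => hx i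
  have hcpos : (0:ℝ) < S.card * lam := by
    have : 0 < S.card := Finset.card_pos.mpr hS
    positivity
  have key : ∫⁻ x, ENNReal.ofReal (f x) ∂μ = ENNReal.ofReal (1 / (S.card * lam)) := by
    rw [lintegral_eq_lintegral_meas_lt μ hnn hf.aemeasurable]
    have hev : ∀ t ∈ Ioi (0:ℝ),
        μ {a | t < f a} = ENNReal.ofReal (exp (-(S.card * lam * t))) := by
      intro t ht
      have ht' : (0:ℝ) ≤ t := le_of_lt ht
      have hseteq : {a : Fin 5 → ℝ | t < f a} = {x | ∀ i ∈ S, t < x i} := by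
        ext x; simp [hfdef, Finset.lt_inf'_iff]
      rw [hseteq, piEvent' hlam S ht', ← ENNReal.ofReal_pow (exp_nonneg _),
        ← Real.exp_nat_mul]
      congr 1
      ring
    rw [setLIntegral_congr_fun_ae measurableSet_Ioi (ae_of_all _ hev),
      ← ofReal_integral_eq_lintegral_ofReal, expIntIoi' hcpos]
    · have : IntegrableOn (fun t => exp (-(S.card * lam * t))) (Ioi (0:ℝ)) := by
        simpa [neg_mul] using exp_neg_integrableOn_Ioi 0 hcpos
      exact this
    · exact ae_of_all _ fun t => exp_nonneg _
  have hint : Integrable f μ :=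
    ⟨hf.aestronglyMeasurable, (hasFiniteIntegral_iff_ofReal hnn).mpr
      (by rw [key]; exact ENNReal.ofReal_lt_top)⟩
  refine ⟨hint, ?_⟩
  rw [integral_eq_lintegral_of_nonneg_ae hnn hf.aestronglyMeasurable, key,
    ENNReal.toReal_ofReal (by positivity)]

private lemma keyc' (b c d e : ℝ) :
    max (min b c) (min d e) = min b c + min d e - min b (min c (min d e)) := by
  have h1 := min_add_max (min b c) (min d e)
  have h2 : min (min b c) (min d e) = min b (min c (min d e)) := by
    simp [min_assoc]
  linarith

private lemma keyb' (a b c d e : ℝ) :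
    min (max b (min d e)) (max (max a c) (min d e))
      = min a b + min b c - min a (min b c) + min d e
        - min a (min b (min d e)) - min b (min c (min d e))
        + min a (min b (min c (min d e))) := by
  set M := min d e with hM
  have dist1 : min (max b M) (max (max a c) M) = max (min b (max a c)) M :=
    (max_min_distrib_right ..).symm
  have dist2 : min b (max a c) = max (min b a) (min b c) := min_max_distrib_left ..
  have h1 := min_add_max (min b (max a c)) M
  have h2 := min_add_max (min b a) (min b c)
  have dist3 : min (min b (max a c)) M = max (min (min b a) M) (min (min b c) M) := by
    rw [dist2]; exact min_max_distrib_right ..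
  have h3 := min_add_max (min (min b a) M) (min (min b c) M)
  have e1 : min (min b a) (min b c) = min a (min b c) := by
    simp [min_comm b a, min_assoc, min_left_comm, min_self]
  have e2 : min (min b a) M = min a (min b M) := by
    simp [min_comm b a, min_assoc]
  have e3 : min (min b c) M = min b (min c M) := by
    simp [min_assoc]
  have e4 : min (min (min b a) M) (min (min b c) M) = min a (min b (min c M)) := by
    rw [e2, e3]
    simp [min_assoc, min_left_comm, min_comm, min_self]
  have e0 : min b a = min a b := min_comm b a
  rw [dist1, dist2] at *
  linarith [min_add_max (max (min b a) (min b c)) M]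

end Aux

/-- Six-worker example: with `X₂, …, X₆` i.i.d. exponential with rate `λ > 0`
(coordinates `x 0, …, x 4`), the expected overall result generating time of the
non-overlapping balanced batching policy (c), `T_c = max(min(X₃,X₄), min(X₅,X₆))`,
is strictly smaller than that of the partially overlapping batching policy (b),
`T_b = min(max(X₃, min(X₅,X₆)), max(max(X₂,X₄), min(X₅,X₆)))`. -/
theorem nonoverlapping_beats_overlapping (lam : ℝ) (hlam : 0 < lam) :
    ∫ x : Fin 5 → ℝ, max (min (x 1) (x 2)) (min (x 3) (x 4))
        ∂(Measure.pi fun _ : Fin 5 => expMeasure lam)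
      < ∫ x : Fin 5 → ℝ,
        min (max (x 1) (min (x 3) (x 4))) (max (max (x 0) (x 2)) (min (x 3) (x 4)))
        ∂(Measure.pi fun _ : Fin 5 => expMeasure lam) := by
  obtain ⟨i01, E01⟩ := infKey' lam hlam {0, 1} (by decide)
  obtain ⟨i12, E12⟩ := infKey' lam hlam {1, 2} (by decide)
  obtain ⟨i012, E012⟩ := infKey' lam hlam {0, 1, 2} (by decide)
  obtain ⟨i34, E34⟩ := infKey' lam hlam {3, 4} (by decide)
  obtain ⟨i0134, E0134⟩ := infKey' lam hlam {0, 1, 3, 4} (by decide)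
  obtain ⟨i1234, E1234⟩ := infKey' lam hlam {1, 2, 3, 4} (by decide)
  obtain ⟨i01234, E01234⟩ := infKey' lam hlam {0, 1, 2, 3, 4} (by decide)
  have hLfun : (fun x : Fin 5 → ℝ => max (min (x 1) (x 2)) (min (x 3) (x 4)))
      = fun x : Fin 5 → ℝ =>
          ((({1, 2} : Finset (Fin 5)).inf' (by decide) fun i => x i)
          + (({3, 4} : Finset (Fin 5)).inf' (by decide) fun i => x i))
          - (({1, 2, 3, 4} : Finset (Fin 5)).inf' (by decide) fun i => x i) := by
    funext x
    show max (min (x 1) (x 2)) (min (x 3) (x 4))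
        = (min (x 1) (x 2) + min (x 3) (x 4))
          - min (x 1) (min (x 2) (min (x 3) (x 4)))
    have := keyc' (x 1) (x 2) (x 3) (x 4)
    linarith
  have hRfun : (fun x : Fin 5 → ℝ =>
        min (max (x 1) (min (x 3) (x 4))) (max (max (x 0) (x 2)) (min (x 3) (x 4))))
      = fun x : Fin 5 → ℝ =>
          (((((( ({0, 1} : Finset (Fin 5)).inf' (by decide) fun i => x i)
          + (({1, 2} : Finset (Fin 5)).inf' (by decide) fun i => x i))
          - (({0, 1, 2} : Finset (Fin 5)).inf' (by decide) fun i => x i))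
          + (({3, 4} : Finset (Fin 5)).inf' (by decide) fun i => x i))
          - (({0, 1, 3, 4} : Finset (Fin 5)).inf' (by decide) fun i => x i))
          - (({1, 2, 3, 4} : Finset (Fin 5)).inf' (by decide) fun i => x i))
          + (({0, 1, 2, 3, 4} : Finset (Fin 5)).inf' (by decide) fun i => x i) := by
    funext x
    show min (max (x 1) (min (x 3) (x 4))) (max (max (x 0) (x 2)) (min (x 3) (x 4)))
        = (((((min (x 0) (x 1) + min (x 1) (x 2))
          - min (x 0) (min (x 1) (x 2)))
          + min (x 3) (x 4))
          - min (x 0) (min (x 1) (min (x 3) (x 4))))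
          - min (x 1) (min (x 2) (min (x 3) (x 4))))
          + min (x 0) (min (x 1) (min (x 2) (min (x 3) (x 4))))
    have := keyb' (x 0) (x 1) (x 2) (x 3) (x 4)
    linarith
  have iA : Integrable (fun x : Fin 5 → ℝ =>
      ((({1, 2} : Finset (Fin 5)).inf' (by decide) fun i => x i)
      + (({3, 4} : Finset (Fin 5)).inf' (by decide) fun i => x i)))
      (Measure.pi fun _ : Fin 5 => expMeasure lam) := i12.add i34
  have iB1 : Integrable (fun x : Fin 5 → ℝ =>
      ((({0, 1} : Finset (Fin 5)).inf' (by decide) fun i => x i)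
      + (({1, 2} : Finset (Fin 5)).inf' (by decide) fun i => x i)))
      (Measure.pi fun _ : Fin 5 => expMeasure lam) := i01.add i12
  have iB2 : Integrable (fun x : Fin 5 → ℝ =>
      (((({0, 1} : Finset (Fin 5)).inf' (by decide) fun i => x i)
      + (({1, 2} : Finset (Fin 5)).inf' (by decide) fun i => x i))
      - (({0, 1, 2} : Finset (Fin 5)).inf' (by decide) fun i => x i)))
      (Measure.pi fun _ : Fin 5 => expMeasure lam) := iB1.sub i012
  have iB3 : Integrable (fun x : Fin 5 → ℝ =>
      ((((({0, 1} : Finset (Fin 5)).inf' (by decide) fun i => x i)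
      + (({1, 2} : Finset (Fin 5)).inf' (by decide) fun i => x i))
      - (({0, 1, 2} : Finset (Fin 5)).inf' (by decide) fun i => x i))
      + (({3, 4} : Finset (Fin 5)).inf' (by decide) fun i => x i)))
      (Measure.pi fun _ : Fin 5 => expMeasure lam) := iB2.add i34
  have iB4 : Integrable (fun x : Fin 5 → ℝ =>
      (((((({0, 1} : Finset (Fin 5)).inf' (by decide) fun i => x i)
      + (({1, 2} : Finset (Fin 5)).inf' (by decide) fun i => x i))
      - (({0, 1, 2} : Finset (Fin 5)).inf' (by decide) fun i => x i))
      + (({3, 4} : Finset (Fin 5)).inf' (by decide) fun i => x i))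
      - (({0, 1, 3, 4} : Finset (Fin 5)).inf' (by decide) fun i => x i)))
      (Measure.pi fun _ : Fin 5 => expMeasure lam) := iB3.sub i0134
  have iB5 : Integrable (fun x : Fin 5 → ℝ =>
      ((((((({0, 1} : Finset (Fin 5)).inf' (by decide) fun i => x i)
      + (({1, 2} : Finset (Fin 5)).inf' (by decide) fun i => x i))
      - (({0, 1, 2} : Finset (Fin 5)).inf' (by decide) fun i => x i))
      + (({3, 4} : Finset (Fin 5)).inf' (by decide) fun i => x i))
      - (({0, 1, 3, 4} : Finset (Fin 5)).inf' (by decide) fun i => x i))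
      - (({1, 2, 3, 4} : Finset (Fin 5)).inf' (by decide) fun i => x i)))
      (Measure.pi fun _ : Fin 5 => expMeasure lam) := iB4.sub i1234
  have hL : ∫ x : Fin 5 → ℝ, max (min (x 1) (x 2)) (min (x 3) (x 4))
        ∂(Measure.pi fun _ : Fin 5 => expMeasure lam)
      = 1 / (2 * lam) + 1 / (2 * lam) - 1 / (4 * lam) := by
    rw [hLfun, integral_sub iA i1234, integral_add i12 i34, E12, E34, E1234]
    norm_num [show (({1, 2} : Finset (Fin 5)).card) = 2 from rfl,
      show (({3, 4} : Finset (Fin 5)).card) = 2 from rfl,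
      show (({1, 2, 3, 4} : Finset (Fin 5)).card) = 4 from rfl]
  have hR : ∫ x : Fin 5 → ℝ,
        min (max (x 1) (min (x 3) (x 4))) (max (max (x 0) (x 2)) (min (x 3) (x 4)))
        ∂(Measure.pi fun _ : Fin 5 => expMeasure lam)
      = 1 / (2 * lam) + 1 / (2 * lam) - 1 / (3 * lam) + 1 / (2 * lam)
        - 1 / (4 * lam) - 1 / (4 * lam) + 1 / (5 * lam) := by
    rw [hRfun, integral_add iB5 i01234, integral_sub iB4 i1234, integral_sub iB3 i0134,
      integral_add iB2 i34, integral_sub iB1 i012, integral_add i01 i12,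
      E01, E12, E012, E34, E0134, E1234, E01234]
    norm_num [show (({0, 1} : Finset (Fin 5)).card) = 2 from rfl,
      show (({1, 2} : Finset (Fin 5)).card) = 2 from rfl,
      show (({0, 1, 2} : Finset (Fin 5)).card) = 3 from rfl,
      show (({3, 4} : Finset (Fin 5)).card) = 2 from rfl,
      show (({0, 1, 3, 4} : Finset (Fin 5)).card) = 4 from rfl,
      show (({1, 2, 3, 4} : Finset (Fin 5)).card) = 4 from rfl,
      show (({0, 1, 2, 3, 4} : Finset (Fin 5)).card) = 5 from rfl]
  rw [hL, hR]
  have hinv : (0:ℝ) < 1 / lam := by positivity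
  have e2 : 1 / (2 * lam) = (1/2) * (1/lam) := by ring
  have e3 : 1 / (3 * lam) = (1/3) * (1/lam) := by ring
  have e4 : 1 / (4 * lam) = (1/4) * (1/lam) := by ring
  have e5 : 1 / (5 * lam) = (1/5) * (1/lam) := by ring
  rw [e2, e3, e4, e5]
  linarith
end

section
/- Let X₂, X₃, X₄, X₅, X₆ be i.i.d. exponential random variables with rate λ > 0 (formally, coordinates of the product on (Fin 5 → ℝ) of five copies of the exponential distribution with rate λ). Define T_a = min( max(X₃, X₅), max(X₂, X₄, X₆) ), T_b = min( max(X₃, min(X₅, X₆)), max(max(X₂, X₄), min(X₅, X₆)) ), and T_c = max( min(X₃, X₄), min(X₅, X₆) ). Then E[T_c] < E[T_b] < E[T_a]: the balanced assignment of non-overlapping batches achieves the strictly smallest expected computing time among the three batching policies of the six-worker example. -/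
open MeasureTheory ProbabilityTheory

open Real Set


variable {lam : ℝ}

lemma expM_Iic (hlam : 0 < lam) {t : ℝ} (ht : 0 ≤ t) :
    expMeasure lam (Iic t) = ENNReal.ofReal (1 - exp (-(lam * t))) := by
  haveI := isProbabilityMeasure_expMeasure hlam
  rw [← ofReal_cdf (expMeasure lam) t]
  have : cdf (expMeasure lam) t = if 0 ≤ t then 1 - exp (-(lam * t)) else 0 :=
    cdf_expMeasure_eq hlam t
  rw [this, if_pos ht]

lemma exp_le_one' (hlam : 0 < lam) {t : ℝ} (ht : 0 ≤ t) : exp (-(lam * t)) ≤ 1 :=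
  exp_le_one_iff.mpr (by nlinarith)

lemma expM_Ioi (hlam : 0 < lam) {t : ℝ} (ht : 0 ≤ t) :
    expMeasure lam (Ioi t) = ENNReal.ofReal (exp (-(lam * t))) := by
  haveI := isProbabilityMeasure_expMeasure hlam
  have h0 : (0:ℝ) ≤ 1 - exp (-(lam * t)) := by
    have := exp_le_one' hlam ht; linarith
  rw [← compl_Iic, prob_compl_eq_one_sub measurableSet_Iic, expM_Iic hlam ht,
    ← ENNReal.ofReal_one, ← ENNReal.ofReal_sub _ h0]
  norm_num

lemma expM_Iio_zero (hlam : 0 < lam) : expMeasure lam (Iio 0) = 0 := by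
  refine measure_mono_null Iio_subset_Iic_self ?_
  rw [expM_Iic hlam le_rfl]
  simp

/-- mixed box: coordinates in S are ≤ t, coordinates in T are > t -/
def mbox (t : ℝ) (S T : Finset (Fin 5)) : Set (Fin 5 → ℝ) :=
  {x | (∀ i ∈ S, x i ≤ t) ∧ (∀ i ∈ T, t < x i)}

lemma mbox_eq_pi {t : ℝ} {S T : Finset (Fin 5)} (hST : Disjoint S T) :
    mbox t S T = univ.pi fun i => if i ∈ S then Iic t else if i ∈ T then Ioi t else univ := by
  ext x
  simp only [mbox, mem_setOf_eq, mem_pi, mem_univ, forall_true_left]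
  constructor
  · rintro ⟨h1, h2⟩ i
    split_ifs with hS hT
    · exact h1 i hS
    · exact h2 i hT
    · trivial
  · intro h
    constructor
    · intro i hi
      have := h i
      rwa [if_pos hi] at this
    · intro i hi
      have := h i
      rwa [if_neg (Finset.disjoint_right.mp hST hi), if_pos hi] at this

lemma mbox_measurable {t : ℝ} {S T : Finset (Fin 5)} (hST : Disjoint S T) :
    MeasurableSet (mbox t S T) := by
  rw [mbox_eq_pi hST]
  refine MeasurableSet.univ_pi fun i => ?_
  split_ifs <;> measurability

lemma measure_mbox (hlam : 0 < lam) {t : ℝ} (ht : 0 ≤ t) {S T : Finset (Fin 5)}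
    (hST : Disjoint S T) :
    ((Measure.pi fun _ : Fin 5 => expMeasure lam) (mbox t S T)).toReal
      = (1 - exp (-(lam * t))) ^ S.card * exp (-(lam * t)) ^ T.card := by
  haveI := isProbabilityMeasure_expMeasure hlam
  have h0 : (0:ℝ) ≤ 1 - exp (-(lam * t)) := by
    have := exp_le_one' hlam ht; linarith
  rw [mbox_eq_pi hST, Measure.pi_pi]
  have hval : ∀ i : Fin 5, expMeasure lam (if i ∈ S then Iic t else if i ∈ T then Ioi t else univ)
      = if i ∈ S then ENNReal.ofReal (1 - exp (-(lam * t)))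
        else if i ∈ T then ENNReal.ofReal (exp (-(lam * t))) else 1 := by
    intro i
    split_ifs
    · exact expM_Iic hlam ht
    · exact expM_Ioi hlam ht
    · simp
  simp only [hval]
  rw [← Finset.prod_mul_prod_compl S]
  have h1 : (∏ i ∈ S, if i ∈ S then ENNReal.ofReal (1 - exp (-(lam * t)))
        else if i ∈ T then ENNReal.ofReal (exp (-(lam * t))) else 1)
      = ENNReal.ofReal (1 - exp (-(lam * t))) ^ S.card := by
    rw [Finset.prod_congr rfl fun i hi => if_pos hi, Finset.prod_const]
  have h2 : (∏ i ∈ Sᶜ, if i ∈ S then ENNReal.ofReal (1 - exp (-(lam * t)))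
        else if i ∈ T then ENNReal.ofReal (exp (-(lam * t))) else 1)
      = ENNReal.ofReal (exp (-(lam * t))) ^ T.card := by
    rw [Finset.prod_congr rfl fun i hi => if_neg (Finset.mem_compl.mp hi),
      Finset.prod_ite_mem]
    have : Sᶜ ∩ T = T := by
      ext i
      simp only [Finset.mem_inter, Finset.mem_compl, and_iff_right_iff_imp]
      exact fun hi => Finset.disjoint_right.mp hST hi
    rw [this, Finset.prod_const]
  rw [h1, h2, ENNReal.toReal_mul, ← ENNReal.ofReal_pow h0, ← ENNReal.ofReal_pow (exp_nonneg _),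
    ENNReal.toReal_ofReal (pow_nonneg h0 _), ENNReal.toReal_ofReal (pow_nonneg (exp_nonneg _) _)]

section Helpers

variable {α : Type*} [MeasurableSpace α] {μ : Measure α}

lemma toReal_union [IsFiniteMeasure μ] {s t : Set α} (ht : MeasurableSet t) :
    (μ (s ∪ t)).toReal = (μ s).toReal + (μ t).toReal - (μ (s ∩ t)).toReal := by
  have h := congrArg ENNReal.toReal (measure_union_add_inter (μ := μ) s ht)
  rw [ENNReal.toReal_add (measure_ne_top _ _) (measure_ne_top _ _),
      ENNReal.toReal_add (measure_ne_top _ _) (measure_ne_top _ _)] at h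
  linarith

lemma toReal_compl [IsProbabilityMeasure μ] {s : Set α} (hs : MeasurableSet s) :
    (μ sᶜ).toReal = 1 - (μ s).toReal := by
  rw [prob_compl_eq_one_sub hs, ENNReal.toReal_sub_of_le prob_le_one ENNReal.one_ne_top,
    ENNReal.toReal_one]

lemma toReal_diff [IsFiniteMeasure μ] {s t : Set α} (hst : t ⊆ s) (ht : MeasurableSet t) :
    (μ (s \ t)).toReal = (μ s).toReal - (μ t).toReal := by
  rw [measure_diff hst ht.nullMeasurableSet (measure_ne_top _ _),
    ENNReal.toReal_sub_of_le (measure_mono hst) (measure_ne_top _ _)]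
end Helpers


def ubox (t : ℝ) (S : Finset (Fin 5)) : Set (Fin 5 → ℝ) := {x | ∃ i ∈ S, t < x i}

lemma ubox_measurable {t : ℝ} {S : Finset (Fin 5)} : MeasurableSet (ubox t S) := by
  have : ubox t S = ⋃ i ∈ S, (fun x : Fin 5 → ℝ => x i) ⁻¹' Ioi t := by
    ext x; simp [ubox]
  rw [this]
  exact MeasurableSet.biUnion S.countable_toSet
    (fun i _ => (measurable_pi_apply i) measurableSet_Ioi)

lemma measure_box (hlam : 0 < lam) {t : ℝ} (ht : 0 ≤ t) (T : Finset (Fin 5)) :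
    ((Measure.pi fun _ : Fin 5 => expMeasure lam) (mbox t ∅ T)).toReal
      = exp (-(lam * t)) ^ T.card := by
  rw [measure_mbox hlam ht (Finset.disjoint_empty_left T)]
  simp

lemma measure_ubox (hlam : 0 < lam) {t : ℝ} (ht : 0 ≤ t) (S : Finset (Fin 5)) :
    ((Measure.pi fun _ : Fin 5 => expMeasure lam) (ubox t S)).toReal
      = 1 - (1 - exp (-(lam * t))) ^ S.card := by
  haveI := isProbabilityMeasure_expMeasure hlam
  have hset : ubox t S = (mbox t S ∅)ᶜ := by
    ext x
    simp only [ubox, mbox, mem_setOf_eq, mem_compl_iff, Finset.notMem_empty, false_implies,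
      implies_true, and_true, not_forall, not_le, exists_prop]
  rw [hset, toReal_compl (mbox_measurable (Finset.disjoint_empty_right S)),
    measure_mbox hlam ht (Finset.disjoint_empty_right S)]
  simp

lemma measure_ubox_inter_box (hlam : 0 < lam) {t : ℝ} (ht : 0 ≤ t) {S T : Finset (Fin 5)}
    (hST : Disjoint S T) :
    ((Measure.pi fun _ : Fin 5 => expMeasure lam) (ubox t S ∩ mbox t ∅ T)).toReal
      = exp (-(lam * t)) ^ T.card - (1 - exp (-(lam * t))) ^ S.card * exp (-(lam * t)) ^ T.card := by
  haveI := isProbabilityMeasure_expMeasure hlam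
  have hsub : mbox t S T ⊆ mbox t ∅ T := fun x hx => ⟨by simp, hx.2⟩
  have hset : ubox t S ∩ mbox t ∅ T = mbox t ∅ T \ mbox t S T := by
    ext x
    simp only [ubox, mbox, mem_inter_iff, mem_diff, mem_setOf_eq, Finset.notMem_empty,
      false_implies, implies_true, true_and]
    constructor
    · rintro ⟨⟨i, hi, hti⟩, hT⟩
      exact ⟨hT, fun h => absurd hti (not_lt.mpr (h.1 i hi))⟩
    · rintro ⟨hT, hn⟩
      refine ⟨?_, hT⟩
      by_contra hc
      push_neg at hc
      exact hn ⟨hc, hT⟩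
  rw [hset, toReal_diff hsub (mbox_measurable hST), measure_box hlam ht,
    measure_mbox hlam ht hST]

lemma measure_Ec (hlam : 0 < lam) {t : ℝ} (ht : 0 ≤ t) :
    ((Measure.pi fun _ : Fin 5 => expMeasure lam)
      {x : Fin 5 → ℝ | t < max (min (x 1) (x 2)) (min (x 3) (x 4))}).toReal
      = 2 * exp (-(lam * t)) ^ 2 - exp (-(lam * t)) ^ 4 := by
  haveI := isProbabilityMeasure_expMeasure hlam
  have hset : {x : Fin 5 → ℝ | t < max (min (x 1) (x 2)) (min (x 3) (x 4))}
      = mbox t ∅ {1,2} ∪ mbox t ∅ {3,4} := by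
    ext x
    simp only [mem_setOf_eq, lt_max_iff, lt_min_iff, mem_union, mbox, Finset.notMem_empty,
      false_implies, implies_true, true_and, Finset.mem_insert, Finset.mem_singleton,
      forall_eq_or_imp, forall_eq]
  have hinter : mbox t ∅ ({1,2} : Finset (Fin 5)) ∩ mbox t ∅ {3,4} = mbox t ∅ {1,2,3,4} := by
    ext x
    simp only [mem_inter_iff, mbox, mem_setOf_eq, Finset.notMem_empty, false_implies,
      implies_true, true_and, Finset.mem_insert, Finset.mem_singleton, forall_eq_or_imp,
      forall_eq]
    tauto
  rw [hset, toReal_union (mbox_measurable (Finset.disjoint_empty_left _)), hinter,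
    measure_box hlam ht, measure_box hlam ht, measure_box hlam ht]
  have c1 : ({1,2} : Finset (Fin 5)).card = 2 := rfl
  have c2 : ({3,4} : Finset (Fin 5)).card = 2 := rfl
  have c3 : ({1,2,3,4} : Finset (Fin 5)).card = 4 := rfl
  rw [c1, c2, c3]
  ring

lemma measure_Ea (hlam : 0 < lam) {t : ℝ} (ht : 0 ≤ t) :
    ((Measure.pi fun _ : Fin 5 => expMeasure lam)
      {x : Fin 5 → ℝ | t < min (max (x 1) (x 3)) (max (x 0) (max (x 2) (x 4)))}).toReal
      = 6 * exp (-(lam * t)) ^ 2 - 9 * exp (-(lam * t)) ^ 3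
        + 5 * exp (-(lam * t)) ^ 4 - exp (-(lam * t)) ^ 5 := by
  haveI := isProbabilityMeasure_expMeasure hlam
  have hset : {x : Fin 5 → ℝ | t < min (max (x 1) (x 3)) (max (x 0) (max (x 2) (x 4)))}
      = ubox t {1,3} ∩ ubox t {0,2,4} := by
    ext x
    simp only [mem_setOf_eq, lt_min_iff, lt_max_iff, mem_inter_iff, ubox, Finset.mem_insert,
      Finset.mem_singleton, exists_eq_or_imp, exists_eq_left]
  have hUV : ubox t ({1,3} : Finset (Fin 5)) ∪ ubox t {0,2,4} = ubox t {0,1,2,3,4} := by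
    ext x
    simp only [mem_union, ubox, mem_setOf_eq, Finset.mem_insert, Finset.mem_singleton,
      exists_eq_or_imp, exists_eq_left]
    tauto
  have hu := toReal_union (μ := Measure.pi fun _ : Fin 5 => expMeasure lam)
    (s := ubox t {1,3}) (t := ubox t {0,2,4}) ubox_measurable
  rw [hUV, measure_ubox hlam ht, measure_ubox hlam ht, measure_ubox hlam ht] at hu
  have c1 : ({1,3} : Finset (Fin 5)).card = 2 := rfl
  have c2 : ({0,2,4} : Finset (Fin 5)).card = 3 := rfl
  have c3 : ({0,1,2,3,4} : Finset (Fin 5)).card = 5 := rfl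
  rw [c1, c2, c3] at hu
  rw [hset]
  linear_combination hu

lemma measure_W (hlam : 0 < lam) {t : ℝ} (ht : 0 ≤ t) {S : Finset (Fin 5)}
    (hS : Disjoint S {3,4}) :
    ((Measure.pi fun _ : Fin 5 => expMeasure lam) (ubox t S ∪ mbox t ∅ {3,4})).toReal
      = 1 - (1 - exp (-(lam * t))) ^ S.card
        + (1 - exp (-(lam * t))) ^ S.card * exp (-(lam * t)) ^ 2 := by
  haveI := isProbabilityMeasure_expMeasure hlam
  rw [toReal_union (mbox_measurable (Finset.disjoint_empty_left _)), measure_ubox hlam ht,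
    measure_box hlam ht, measure_ubox_inter_box hlam ht hS]
  have c2 : ({3,4} : Finset (Fin 5)).card = 2 := rfl
  rw [c2]
  try ring

lemma measure_Eb (hlam : 0 < lam) {t : ℝ} (ht : 0 ≤ t) :
    ((Measure.pi fun _ : Fin 5 => expMeasure lam)
      {x : Fin 5 → ℝ | t < min (max (x 1) (min (x 3) (x 4)))
        (max (max (x 0) (x 2)) (min (x 3) (x 4)))}).toReal
      = 3 * exp (-(lam * t)) ^ 2 - exp (-(lam * t)) ^ 3
        - 2 * exp (-(lam * t)) ^ 4 + exp (-(lam * t)) ^ 5 := by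
  haveI := isProbabilityMeasure_expMeasure hlam
  have hset : {x : Fin 5 → ℝ | t < min (max (x 1) (min (x 3) (x 4)))
        (max (max (x 0) (x 2)) (min (x 3) (x 4)))}
      = (ubox t {1} ∪ mbox t ∅ {3,4}) ∩ (ubox t {0,2} ∪ mbox t ∅ {3,4}) := by
    ext x
    simp only [mem_setOf_eq, lt_min_iff, lt_max_iff, mem_inter_iff, mem_union, ubox, mbox,
      Finset.mem_insert, Finset.mem_singleton, Finset.notMem_empty, false_implies,
      implies_true, true_and, exists_eq_or_imp, exists_eq_left, forall_eq_or_imp, forall_eq]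
    try tauto
  have hUV : (ubox t ({1} : Finset (Fin 5)) ∪ mbox t ∅ {3,4})
        ∪ (ubox t {0,2} ∪ mbox t ∅ {3,4}) = ubox t {0,1,2} ∪ mbox t ∅ {3,4} := by
    ext x
    simp only [mem_union, ubox, mem_setOf_eq, Finset.mem_insert, Finset.mem_singleton,
      exists_eq_or_imp, exists_eq_left]
    tauto
  have hu := toReal_union (μ := Measure.pi fun _ : Fin 5 => expMeasure lam)
    (s := ubox t {1} ∪ mbox t ∅ {3,4}) (t := ubox t {0,2} ∪ mbox t ∅ {3,4})
    (ubox_measurable.union (mbox_measurable (Finset.disjoint_empty_left _)))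
  rw [hUV, measure_W hlam ht (by decide), measure_W hlam ht (by decide),
    measure_W hlam ht (by decide)] at hu
  have c1 : ({1} : Finset (Fin 5)).card = 1 := rfl
  have c2 : ({0,2} : Finset (Fin 5)).card = 2 := rfl
  have c3 : ({0,1,2} : Finset (Fin 5)).card = 3 := rfl
  rw [c1, c2, c3] at hu
  rw [hset]
  linear_combination hu

lemma ae_nonneg (hlam : 0 < lam) :
    ∀ᵐ x ∂(Measure.pi fun _ : Fin 5 => expMeasure lam), ∀ i, 0 ≤ x i := by
  haveI := isProbabilityMeasure_expMeasure hlam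
  rw [ae_all_iff]
  intro i
  rw [ae_iff]
  have : {x : Fin 5 → ℝ | ¬ 0 ≤ x i} = Function.eval i ⁻¹' Iio 0 := by
    ext x; simp [not_le, Function.eval]
  rw [this]
  exact Measure.pi_eval_preimage_null _ (expM_Iio_zero hlam)

lemma measure_coord_Ioi (hlam : 0 < lam) {t : ℝ} (ht : 0 ≤ t) (i : Fin 5) :
    (Measure.pi fun _ : Fin 5 => expMeasure lam) ((fun x : Fin 5 → ℝ => x i) ⁻¹' Ioi t)
      = ENNReal.ofReal (exp (-(lam * t))) := by
  haveI := isProbabilityMeasure_expMeasure hlam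
  have hset : (fun x : Fin 5 → ℝ => x i) ⁻¹' Ioi t = mbox t ∅ {i} := by
    ext x; simp [mbox]
  rw [hset, ← ENNReal.ofReal_toReal
    (measure_ne_top (Measure.pi fun _ : Fin 5 => expMeasure lam) _),
    measure_mbox hlam ht (Finset.disjoint_empty_left _)]
  simp

lemma expectation_eq (hlam : 0 < lam) {f : (Fin 5 → ℝ) → ℝ} (hf : Measurable f)
    (hnn : ∀ x : Fin 5 → ℝ, (∀ i, 0 ≤ x i) → 0 ≤ f x)
    (hsub : ∀ t : ℝ, 0 < t → {x : Fin 5 → ℝ | t < f x} ⊆ ubox t Finset.univ)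
    {g : ℝ → ℝ}
    (hg : ∀ t : ℝ, 0 < t →
      ((Measure.pi fun _ : Fin 5 => expMeasure lam) {x : Fin 5 → ℝ | t < f x}).toReal = g t) :
    ∫ x, f x ∂(Measure.pi fun _ : Fin 5 => expMeasure lam) = ∫ t in Ioi 0, g t := by
  haveI := isProbabilityMeasure_expMeasure hlam
  set μ5 := Measure.pi fun _ : Fin 5 => expMeasure lam with hμ5
  have hae : 0 ≤ᵐ[μ5] f := (ae_nonneg hlam).mono fun x hx => hnn x hx
  have hkey := lintegral_eq_lintegral_meas_lt μ5 hae hf.aemeasurable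
  have hbound : (∫⁻ t in Ioi 0, μ5 {a | t < f a}) < ⊤ := by
    have hle : ∀ t ∈ Ioi (0:ℝ), μ5 {a | t < f a} ≤ 5 * ENNReal.ofReal (exp (-(lam * t))) := by
      intro t ht
      refine (measure_mono (hsub t ht)).trans ?_
      have huni : ubox t Finset.univ = ⋃ i ∈ (Finset.univ : Finset (Fin 5)),
          (fun x : Fin 5 → ℝ => x i) ⁻¹' Ioi t := by
        ext x; simp [ubox]
      rw [huni]
      refine (measure_biUnion_finset_le _ _).trans ?_
      have hc : ∀ i ∈ (Finset.univ : Finset (Fin 5)),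
          μ5 ((fun x : Fin 5 → ℝ => x i) ⁻¹' Ioi t) = ENNReal.ofReal (exp (-(lam * t))) :=
        fun i _ => measure_coord_Ioi hlam (le_of_lt ht) i
      rw [Finset.sum_congr rfl hc, Finset.sum_const]
      simp [mul_comm]
    have hint : IntegrableOn (fun t : ℝ => exp (-(lam * t))) (Ioi 0) := by
      simpa [neg_mul] using exp_neg_integrableOn_Ioi 0 hlam
    calc (∫⁻ t in Ioi 0, μ5 {a | t < f a})
        ≤ ∫⁻ t in Ioi 0, 5 * ENNReal.ofReal (exp (-(lam * t))) :=
          setLIntegral_mono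
            (((Real.measurable_exp.comp ((measurable_const.mul measurable_id).neg)).ennreal_ofReal).const_mul 5) hle
      _ = 5 * ∫⁻ t in Ioi 0, ENNReal.ofReal (exp (-(lam * t))) := by
          rw [lintegral_const_mul']; exact ENNReal.ofNat_ne_top
      _ < ⊤ := by
          refine ENNReal.mul_lt_top (by simp) ?_
          have heq : (∫⁻ t in Ioi 0, ENNReal.ofReal (exp (-(lam * t))))
              = ∫⁻ t in Ioi 0, (‖exp (-(lam * t))‖₊ : ENNReal) :=
            lintegral_congr fun t => (Real.enorm_eq_ofReal (exp_nonneg _)).symm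
          rw [heq]
          exact hint.2
  have hfin : Integrable f μ5 := by
    refine ⟨hf.aestronglyMeasurable, ?_⟩
    rw [hasFiniteIntegral_iff_ofReal hae, hkey]
    exact hbound
  rw [hfin.integral_eq_integral_meas_lt hae]
  exact setIntegral_congr_fun measurableSet_Ioi fun t ht => hg t ht

lemma pow_exp_eq (k : ℕ) (t : ℝ) : exp (-(lam * t)) ^ k = exp (-((k : ℝ) * lam * t)) := by
  rw [← exp_nat_mul]; congr 1; ring

lemma intOn_exp {b : ℝ} (hb : 0 < b) :
    IntegrableOn (fun t : ℝ => exp (-(b * t))) (Ioi 0) := by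
  simpa [neg_mul] using exp_neg_integrableOn_Ioi 0 hb

lemma int_exp {b : ℝ} (hb : 0 < b) : ∫ t in Ioi (0:ℝ), exp (-(b * t)) = 1 / b := by
  have h := integral_comp_mul_left_Ioi (fun x => exp (-x)) 0 hb
  simp only [mul_zero, integral_exp_neg_Ioi, neg_zero, exp_zero, smul_eq_mul, mul_one] at h
  rw [h]
  ring

lemma intOn_pk (hlam : 0 < lam) (k : ℕ) (hk : 0 < k) :
    IntegrableOn (fun t : ℝ => exp (-(lam * t)) ^ k) (Ioi 0) := by
  have : (fun t : ℝ => exp (-(lam * t)) ^ k) = fun t : ℝ => exp (-(((k : ℝ) * lam) * t)) := by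
    funext t; exact pow_exp_eq k t
  rw [this]
  exact intOn_exp (by positivity)

lemma int_pk (hlam : 0 < lam) (k : ℕ) (hk : 0 < k) :
    ∫ t in Ioi (0:ℝ), exp (-(lam * t)) ^ k = 1 / ((k : ℝ) * lam) := by
  have : ∀ t ∈ Ioi (0:ℝ), exp (-(lam * t)) ^ k = exp (-(((k : ℝ) * lam) * t)) :=
    fun t _ => pow_exp_eq k t
  rw [setIntegral_congr_fun measurableSet_Ioi this, int_exp (by positivity)]

lemma int_poly (hlam : 0 < lam) (a b c d : ℝ) :
    ∫ t in Ioi (0:ℝ), (a * exp (-(lam * t)) ^ 2 + b * exp (-(lam * t)) ^ 3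
      + c * exp (-(lam * t)) ^ 4 + d * exp (-(lam * t)) ^ 5)
      = (a/2 + b/3 + c/4 + d/5) / lam := by
  have i2 := (intOn_pk hlam 2 (by norm_num)).const_mul a
  have i3 := (intOn_pk hlam 3 (by norm_num)).const_mul b
  have i4 := (intOn_pk hlam 4 (by norm_num)).const_mul c
  have i5 := (intOn_pk hlam 5 (by norm_num)).const_mul d
  have i23 : Integrable (fun t : ℝ => a * exp (-(lam * t)) ^ 2 + b * exp (-(lam * t)) ^ 3)
      (volume.restrict (Ioi 0)) := i2.add i3
  have i234 : Integrable (fun t : ℝ => a * exp (-(lam * t)) ^ 2 + b * exp (-(lam * t)) ^ 3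
      + c * exp (-(lam * t)) ^ 4) (volume.restrict (Ioi 0)) := i23.add i4
  rw [integral_add i234 i5, integral_add i23 i4, integral_add i2 i3]
  rw [integral_const_mul, integral_const_mul, integral_const_mul, integral_const_mul,
    int_pk hlam 2 (by norm_num), int_pk hlam 3 (by norm_num), int_pk hlam 4 (by norm_num),
    int_pk hlam 5 (by norm_num)]
  push_cast
  field_simp

theorem balanced_beats_overlapping_beats_cyclic' (lam : ℝ) (hlam : 0 < lam) :
    (∫ x : Fin 5 → ℝ, max (min (x 1) (x 2)) (min (x 3) (x 4))
        ∂(Measure.pi fun _ : Fin 5 => expMeasure lam)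
      < ∫ x : Fin 5 → ℝ,
        min (max (x 1) (min (x 3) (x 4))) (max (max (x 0) (x 2)) (min (x 3) (x 4)))
        ∂(Measure.pi fun _ : Fin 5 => expMeasure lam))
    ∧
    (∫ x : Fin 5 → ℝ,
        min (max (x 1) (min (x 3) (x 4))) (max (max (x 0) (x 2)) (min (x 3) (x 4)))
        ∂(Measure.pi fun _ : Fin 5 => expMeasure lam)
      < ∫ x : Fin 5 → ℝ,
        min (max (x 1) (x 3)) (max (x 0) (max (x 2) (x 4)))
        ∂(Measure.pi fun _ : Fin 5 => expMeasure lam)) := by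
  have hEc : (∫ x : Fin 5 → ℝ, max (min (x 1) (x 2)) (min (x 3) (x 4))
      ∂(Measure.pi fun _ : Fin 5 => expMeasure lam))
      = ((2:ℝ)/2 + 0/3 + (-1)/4 + 0/5) / lam := by
    have h := expectation_eq hlam
      (f := fun x : Fin 5 → ℝ => max (min (x 1) (x 2)) (min (x 3) (x 4)))
      (g := fun t => 2 * exp (-(lam * t)) ^ 2 + 0 * exp (-(lam * t)) ^ 3
        + (-1) * exp (-(lam * t)) ^ 4 + 0 * exp (-(lam * t)) ^ 5)
      (((measurable_pi_apply 1).min (measurable_pi_apply 2)).max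
        ((measurable_pi_apply 3).min (measurable_pi_apply 4)))
      (fun x hx => le_max_of_le_left (le_min (hx 1) (hx 2)))
      (fun t ht x hx => by
        simp only [mem_setOf_eq, lt_max_iff, lt_min_iff] at hx
        rcases hx with ⟨h1, _⟩ | ⟨h1, _⟩
        exacts [⟨1, Finset.mem_univ _, h1⟩, ⟨3, Finset.mem_univ _, h1⟩])
      (fun t ht => by rw [measure_Ec hlam ht.le]; ring)
    rw [h, int_poly hlam 2 0 (-1) 0]
  have hEb : (∫ x : Fin 5 → ℝ,
      min (max (x 1) (min (x 3) (x 4))) (max (max (x 0) (x 2)) (min (x 3) (x 4)))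
      ∂(Measure.pi fun _ : Fin 5 => expMeasure lam))
      = ((3:ℝ)/2 + (-1)/3 + (-2)/4 + 1/5) / lam := by
    have h := expectation_eq hlam
      (f := fun x : Fin 5 → ℝ =>
        min (max (x 1) (min (x 3) (x 4))) (max (max (x 0) (x 2)) (min (x 3) (x 4))))
      (g := fun t => 3 * exp (-(lam * t)) ^ 2 + (-1) * exp (-(lam * t)) ^ 3
        + (-2) * exp (-(lam * t)) ^ 4 + 1 * exp (-(lam * t)) ^ 5)
      (((measurable_pi_apply 1).max ((measurable_pi_apply 3).min (measurable_pi_apply 4))).min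
        (((measurable_pi_apply 0).max (measurable_pi_apply 2)).max
          ((measurable_pi_apply 3).min (measurable_pi_apply 4))))
      (fun x hx => le_min (le_max_of_le_left (hx 1))
        (le_max_of_le_left (le_max_of_le_left (hx 0))))
      (fun t ht x hx => by
        simp only [mem_setOf_eq, lt_min_iff, lt_max_iff] at hx
        rcases hx.1 with h1 | ⟨h1, _⟩
        exacts [⟨1, Finset.mem_univ _, h1⟩, ⟨3, Finset.mem_univ _, h1⟩])
      (fun t ht => by rw [measure_Eb hlam ht.le]; ring)
    rw [h, int_poly hlam 3 (-1) (-2) 1]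
  have hEa : (∫ x : Fin 5 → ℝ,
      min (max (x 1) (x 3)) (max (x 0) (max (x 2) (x 4)))
      ∂(Measure.pi fun _ : Fin 5 => expMeasure lam))
      = ((6:ℝ)/2 + (-9)/3 + 5/4 + (-1)/5) / lam := by
    have h := expectation_eq hlam
      (f := fun x : Fin 5 → ℝ => min (max (x 1) (x 3)) (max (x 0) (max (x 2) (x 4))))
      (g := fun t => 6 * exp (-(lam * t)) ^ 2 + (-9) * exp (-(lam * t)) ^ 3
        + 5 * exp (-(lam * t)) ^ 4 + (-1) * exp (-(lam * t)) ^ 5)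
      (((measurable_pi_apply 1).max (measurable_pi_apply 3)).min
        ((measurable_pi_apply 0).max ((measurable_pi_apply 2).max (measurable_pi_apply 4))))
      (fun x hx => le_min (le_max_of_le_left (hx 1)) (le_max_of_le_left (hx 0)))
      (fun t ht x hx => by
        simp only [mem_setOf_eq, lt_min_iff, lt_max_iff] at hx
        rcases hx.1 with h1 | h1
        exacts [⟨1, Finset.mem_univ _, h1⟩, ⟨3, Finset.mem_univ _, h1⟩])
      (fun t ht => by rw [measure_Ea hlam ht.le]; ring)
    rw [h, int_poly hlam 6 (-9) 5 (-1)]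
  constructor
  · rw [hEc, hEb, div_lt_div_iff₀ hlam hlam]
    exact mul_lt_mul_of_pos_right (by norm_num) hlam
  · rw [hEb, hEa, div_lt_div_iff₀ hlam hlam]
    exact mul_lt_mul_of_pos_right (by norm_num) hlam


/-- Six-worker example: with `X₂, …, X₆` i.i.d. exponential with rate `λ > 0`
(coordinates `x 0, …, x 4`), the expected overall computing times of the three batching
policies of Figure 4 satisfy `E[T_c] < E[T_b] < E[T_a]`, where
`T_a = min(max(X₃,X₅), max(X₂,X₄,X₆))` (cyclic),
`T_b = min(max(X₃, min(X₅,X₆)), max(max(X₂,X₄), min(X₅,X₆)))` (partially overlapping), and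
`T_c = max(min(X₃,X₄), min(X₅,X₆))` (non-overlapping balanced): the balanced assignment of
non-overlapping batches achieves the strictly smallest expected computing time. -/
theorem balanced_beats_overlapping_beats_cyclic (lam : ℝ) (hlam : 0 < lam) :
    (∫ x : Fin 5 → ℝ, max (min (x 1) (x 2)) (min (x 3) (x 4))
        ∂(Measure.pi fun _ : Fin 5 => expMeasure lam)
      < ∫ x : Fin 5 → ℝ,
        min (max (x 1) (min (x 3) (x 4))) (max (max (x 0) (x 2)) (min (x 3) (x 4)))
        ∂(Measure.pi fun _ : Fin 5 => expMeasure lam))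
    ∧
    (∫ x : Fin 5 → ℝ,
        min (max (x 1) (min (x 3) (x 4))) (max (max (x 0) (x 2)) (min (x 3) (x 4)))
        ∂(Measure.pi fun _ : Fin 5 => expMeasure lam)
      < ∫ x : Fin 5 → ℝ,
        min (max (x 1) (x 3)) (max (x 0) (max (x 2) (x 4)))
        ∂(Measure.pi fun _ : Fin 5 => expMeasure lam)) := by
  exact balanced_beats_overlapping_beats_cyclic' lam hlam
end
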